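/- Define φ : ℝ² → ℝ³ by φ(x) := ( θ[1,0](x) − θ[0,0](x), θ[0,1](x) − θ[0,0](x), θ[1,1](x) − θ[0,0](x) ). Set θ₁₀ := ¼[u,u], θ₀₁ := ¼[v,v], θ₁₁ := ¼[w,w], and τ₀ := (θ₁₀, θ₀₁, θ₁₁), τ₁ := (−θ₁₀, θ₁₁−θ₁₀, θ₀₁−θ₁₀), τ₂ := (θ₁₁−θ₀₁, −θ₀₁, θ₁₀−θ₀₁), τ₃ := (θ₀₁−θ₁₁, θ₁₀−θ₁₁, −θ₁₁). Let 𝒫 := { T = (T₁,T₂,T₃) ∈ ℝ³ : |T₁+T₂−T₃| ≤ θ₁₀+θ₀₁−θ₁₁, |T₁−T₂+T₃| ≤ θ₁₀−θ₀₁+θ₁₁, |T₁−T₂−T₃| ≤ −θ₁₀+θ₀₁+θ₁₁ } (note θ₁₀+θ₀₁−θ₁₁ = −½[u,v] > 0, θ₁₀−θ₀₁+θ₁₁ = −½[u,w] > 0, −θ₁₀+θ₀₁+θ₁₁ = −½[v,w] > 0, so 𝒫 is a nondegenerate parallelepiped). Then: (1) 𝒫 equals the convex hull of the eight points ±τ₀,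 ±τ₁, ±τ₂, ±τ₃, and these eight points are exactly the extreme points (vertices) of 𝒫; (2) the image φ(ℝ²) (the tropical Kummer quartic surface) equals the topological boundary of 𝒫. -/

import Mathlib

/-!
STATEMENT 9: With `φ = (θ[1,0] − θ[0,0], θ[0,1] − θ[0,0], θ[1,1] − θ[0,0])`,
`θ₁₀ = ¼[u,u]`, `θ₀₁ = ¼[v,v]`, `θ₁₁ = ¼[w,w]`, and the parallelepiped
`Ppar = {T : |T₁+T₂−T₃| ≤ θ₁₀+θ₀₁−θ₁₁, |T₁−T₂+T₃| ≤ θ₁₀−θ₀₁+θ₁₁, |T₁−T₂−T₃| ≤ −θ₁₀+θ₀₁+θ₁₁}`: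
(1) `Ppar` is the convex hull of `±τ₀, ±τ₁, ±τ₂, ±τ₃` and these eight points are exactly its
extreme points; (2) the image `φ(ℝ²)` (the tropical Kummer quartic surface) equals the
topological boundary of `Ppar`.
-/

noncomputable section

/-- The standard inner product on `ℝ × ℝ`. -/
def ip (x y : ℝ × ℝ) : ℝ := x.1 * y.1 + x.2 * y.2

/-- The lattice `ℤu + ℤv` as a subset of `ℝ × ℝ`. -/
def lat (u v : ℝ × ℝ) : Set (ℝ × ℝ) :=
  {p | ∃ m n : ℤ, p = (m : ℝ) • u + (n : ℝ) • v}

/-- The second-order tropical theta function `θ[j₁,j₂]` of the lattice `ℤu + ℤv`. -/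
def theta (u v : ℝ × ℝ) (j₁ j₂ : ℝ) (x : ℝ × ℝ) : ℝ :=
  sInf {t : ℝ | ∃ p ∈ lat u v,
      t = ip (x + p + (j₁ / 2) • u + (j₂ / 2) • v) (x + p + (j₁ / 2) • u + (j₂ / 2) • v)}
    - ip x x

/-- The map `φ = (θ[1,0] − θ[0,0], θ[0,1] − θ[0,0], θ[1,1] − θ[0,0]) : ℝ² → ℝ³`. -/
def phiMap (u v : ℝ × ℝ) (x : ℝ × ℝ) : ℝ × ℝ × ℝ :=
  (theta u v 1 0 x - theta u v 0 0 x,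
   theta u v 0 1 x - theta u v 0 0 x,
   theta u v 1 1 x - theta u v 0 0 x)

namespace TropKum


/-- Descent lemma for the Voronoi cell: the quadratic form value at any lattice point
is at least its value at the origin. -/
lemma descent0 (al be ga P R : ℝ) (hal : 0 < al) (hbe : 0 < be) (hga : 0 < ga)
    (hP : |P| ≤ al + be) (hR : |R| ≤ al + ga) (hPR : |P + R| ≤ be + ga) :
    ∀ m n : ℤ, 0 ≤ (al+be)*m^2 - 2*al*m*n + (al+ga)*n^2 + m*P + n*R := by
  obtain ⟨hP1, hP2⟩ := abs_le.1 hP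
  obtain ⟨hR1, hR2⟩ := abs_le.1 hR
  obtain ⟨hPR1, hPR2⟩ := abs_le.1 hPR
  suffices H : ∀ N : ℕ, ∀ m n : ℤ, m.natAbs + n.natAbs ≤ N →
      0 ≤ (al+be)*m^2 - 2*al*m*n + (al+ga)*n^2 + m*P + n*R by
    intro m n; exact H (m.natAbs + n.natAbs) m n le_rfl
  intro N
  induction N with
  | zero =>
    intro m n h
    have hm : m = 0 := by omega
    have hn : n = 0 := by omega
    subst hm; subst hn; push_cast; nlinarith
  | succ N ih =>
    intro m n h
    have hcase : (m = 0 ∧ n = 0) ∨ (1 ≤ m ∧ n ≤ 0) ∨ (m ≤ -1 ∧ 0 ≤ n) ∨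
        (1 ≤ m ∧ 1 ≤ n) ∨ (m ≤ -1 ∧ n ≤ -1) ∨ (m = 0 ∧ 1 ≤ n) ∨ (m = 0 ∧ n ≤ -1) := by
      omega
    rcases hcase with ⟨rfl, rfl⟩ | ⟨hm, hn⟩ | ⟨hm, hn⟩ | ⟨hm, hn⟩ | ⟨hm, hn⟩ | ⟨rfl, hn⟩ | ⟨rfl, hn⟩
    · push_cast; nlinarith
    · have hih := ih (m-1) n (by omega)
      have hm' : (1:ℝ) ≤ (m:ℝ) := by exact_mod_cast hm
      have hn' : ((n:ℝ)) ≤ 0 := by exact_mod_cast hn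
      push_cast at hih ⊢
      nlinarith [mul_nonneg (by linarith : (0:ℝ) ≤ al+be) (by linarith : (0:ℝ) ≤ (m:ℝ)-1),
        mul_nonneg hal.le (by linarith : (0:ℝ) ≤ -(n:ℝ))]
    · have hih := ih (m+1) n (by omega)
      have hm' : ((m:ℝ)) ≤ -1 := by exact_mod_cast hm
      have hn' : (0:ℝ) ≤ (n:ℝ) := by exact_mod_cast hn
      push_cast at hih ⊢
      nlinarith [mul_nonneg (by linarith : (0:ℝ) ≤ al+be) (by linarith : (0:ℝ) ≤ -(m:ℝ)-1),
        mul_nonneg hal.le hn']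
    · have hih := ih (m-1) (n-1) (by omega)
      have hm' : (1:ℝ) ≤ (m:ℝ) := by exact_mod_cast hm
      have hn' : (1:ℝ) ≤ (n:ℝ) := by exact_mod_cast hn
      push_cast at hih ⊢
      nlinarith [mul_nonneg hbe.le (by linarith : (0:ℝ) ≤ (m:ℝ)-1),
        mul_nonneg hga.le (by linarith : (0:ℝ) ≤ (n:ℝ)-1)]
    · have hih := ih (m+1) (n+1) (by omega)
      have hm' : ((m:ℝ)) ≤ -1 := by exact_mod_cast hm
      have hn' : ((n:ℝ)) ≤ -1 := by exact_mod_cast hn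
      push_cast at hih ⊢
      nlinarith [mul_nonneg hbe.le (by linarith : (0:ℝ) ≤ -(m:ℝ)-1),
        mul_nonneg hga.le (by linarith : (0:ℝ) ≤ -(n:ℝ)-1)]
    · have hih := ih 0 (n-1) (by omega)
      have hn' : (1:ℝ) ≤ (n:ℝ) := by exact_mod_cast hn
      push_cast at hih ⊢
      nlinarith [mul_nonneg (by linarith : (0:ℝ) ≤ al+ga) (by linarith : (0:ℝ) ≤ (n:ℝ)-1)]
    · have hih := ih 0 (n+1) (by omega)
      have hn' : ((n:ℝ)) ≤ -1 := by exact_mod_cast hn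
      push_cast at hih ⊢
      nlinarith [mul_nonneg (by linarith : (0:ℝ) ≤ al+ga) (by linarith : (0:ℝ) ≤ -(n:ℝ)-1)]



set_option maxHeartbeats 1000000 in
/-- Descent lemma for the half-shifted lattice minimization. -/
lemma descent4 (al be ga P R : ℝ) (hal : 0 < al) (hbe : 0 < be) (hga : 0 < ga)
    (hP : |P| ≤ al + be) (hR : |R| ≤ al + ga) (hPR : |P + R| ≤ be + ga) :
    ∀ m n : ℤ, min 0 (min (-P) (min (ga + R) (ga - P - R))) ≤
      (al+be)*m^2 - 2*al*m*n + (al+ga)*n^2 + m*(P+(al+be)) + n*(R-al) := by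
  obtain ⟨hP1, hP2⟩ := abs_le.1 hP
  obtain ⟨hR1, hR2⟩ := abs_le.1 hR
  obtain ⟨hPR1, hPR2⟩ := abs_le.1 hPR
  set c : ℝ := min 0 (min (-P) (min (ga + R) (ga - P - R))) with hc
  have hc0 : c ≤ 0 := min_le_left _ _
  have hc1 : c ≤ -P := le_trans (min_le_right _ _) (min_le_left _ _)
  have hc2 : c ≤ ga + R := le_trans (min_le_right _ _) (le_trans (min_le_right _ _) (min_le_left _ _))
  have hc3 : c ≤ ga - P - R := le_trans (min_le_right _ _) (le_trans (min_le_right _ _) (min_le_right _ _))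
  clear_value c
  clear hc hP hR hPR
  suffices H : ∀ N : ℕ, ∀ m n : ℤ, (2*m+1).natAbs + 2 * n.natAbs ≤ N →
      c ≤ (al+be)*m^2 - 2*al*m*n + (al+ga)*n^2 + m*(P+(al+be)) + n*(R-al) by
    intro m n; exact H _ m n le_rfl
  intro N
  induction N with
  | zero => intro m n h; omega
  | succ N ih =>
    intro m n h
    have hcase : (m = 0 ∧ n = 0) ∨ (m = -1 ∧ n = 0) ∨ (m = 0 ∧ n = 1) ∨ (m = -1 ∧ n = -1) ∨
        (1 ≤ m ∧ n ≤ 0) ∨ (1 ≤ m ∧ 1 ≤ n) ∨ (m ≤ -2 ∧ n ≤ -1) ∨ (m ≤ -2 ∧ 0 ≤ n) ∨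
        ((-1 ≤ m ∧ m ≤ 0) ∧ 2 ≤ n) ∨ (m = -1 ∧ n = 1) ∨
        ((-1 ≤ m ∧ m ≤ 0) ∧ n ≤ -2) ∨ (m = 0 ∧ n = -1) := by
      omega
    rcases hcase with ⟨rfl, rfl⟩ | ⟨rfl, rfl⟩ | ⟨rfl, rfl⟩ | ⟨rfl, rfl⟩ | ⟨hm, hn⟩ | ⟨hm, hn⟩ |
      ⟨hm, hn⟩ | ⟨hm, hn⟩ | ⟨⟨hm1, hm2⟩, hn⟩ | ⟨rfl, rfl⟩ | ⟨⟨hm1, hm2⟩, hn⟩ | ⟨rfl, rfl⟩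
    · push_cast; norm_num; linarith
    · push_cast; norm_num; linarith
    · push_cast; norm_num; linarith
    · push_cast; norm_num; linarith
    · -- 1 ≤ m, n ≤ 0 : step to (m-1, n)
      have hih := ih (m-1) n (by omega)
      have hm' : (1:ℝ) ≤ (m:ℝ) := by exact_mod_cast hm
      have hn' : ((n:ℝ)) ≤ 0 := by exact_mod_cast hn
      push_cast at hih ⊢
      have h1 : 0 ≤ (al+be)*((m:ℝ)-1) := mul_nonneg (by linarith) (by linarith)
      have h2 : 0 ≤ al * (-(n:ℝ)) := mul_nonneg hal.le (by linarith)
      have hd : (al+be)*(m:ℝ)^2 - 2*al*m*n + (al+ga)*n^2 + m*(P+(al+be)) + n*(R-al)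
          = ((al+be)*((m:ℝ)-1)^2 - 2*al*((m:ℝ)-1)*n + (al+ga)*n^2 + ((m:ℝ)-1)*(P+(al+be)) + n*(R-al))
            + (2*(al+be)*(m:ℝ) + P - 2*al*(n:ℝ)) := by ring
      rw [hd]; linarith
    · -- 1 ≤ m, 1 ≤ n : step to (m-1, n-1)
      have hih := ih (m-1) (n-1) (by omega)
      have hm' : (1:ℝ) ≤ (m:ℝ) := by exact_mod_cast hm
      have hn' : (1:ℝ) ≤ (n:ℝ) := by exact_mod_cast hn
      push_cast at hih ⊢
      have h1 : 0 ≤ be*((m:ℝ)-1) := mul_nonneg hbe.le (by linarith)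
      have h2 : 0 ≤ ga*((n:ℝ)-1) := mul_nonneg hga.le (by linarith)
      have hd : (al+be)*(m:ℝ)^2 - 2*al*m*n + (al+ga)*n^2 + m*(P+(al+be)) + n*(R-al)
          = ((al+be)*((m:ℝ)-1)^2 - 2*al*((m:ℝ)-1)*((n:ℝ)-1) + (al+ga)*((n:ℝ)-1)^2
              + ((m:ℝ)-1)*(P+(al+be)) + ((n:ℝ)-1)*(R-al))
            + (be*(2*(m:ℝ)-1) + ga*(2*(n:ℝ)-1) + P + R + be) := by ring
      rw [hd]; linarith
    · -- m ≤ -2, n ≤ -1 : step to (m+1, n+1)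
      have hih := ih (m+1) (n+1) (by omega)
      have hm' : ((m:ℝ)) ≤ -2 := by exact_mod_cast hm
      have hn' : ((n:ℝ)) ≤ -1 := by exact_mod_cast hn
      push_cast at hih ⊢
      have h1 : 0 ≤ be*(-(m:ℝ)-2) := mul_nonneg hbe.le (by linarith)
      have h2 : 0 ≤ ga*(-(n:ℝ)-1) := mul_nonneg hga.le (by linarith)
      have hd : (al+be)*(m:ℝ)^2 - 2*al*m*n + (al+ga)*n^2 + m*(P+(al+be)) + n*(R-al)
          = ((al+be)*((m:ℝ)+1)^2 - 2*al*((m:ℝ)+1)*((n:ℝ)+1) + (al+ga)*((n:ℝ)+1)^2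
              + ((m:ℝ)+1)*(P+(al+be)) + ((n:ℝ)+1)*(R-al))
            + (be*(-2*(m:ℝ)-1) + ga*(-2*(n:ℝ)-1) - P - R - be) := by ring
      rw [hd]; linarith
    · -- m ≤ -2, 0 ≤ n : step to (m+1, n)
      have hih := ih (m+1) n (by omega)
      have hm' : ((m:ℝ)) ≤ -2 := by exact_mod_cast hm
      have hn' : (0:ℝ) ≤ (n:ℝ) := by exact_mod_cast hn
      push_cast at hih ⊢
      have h1 : 0 ≤ (al+be)*(-(m:ℝ)-2) := mul_nonneg (by linarith) (by linarith)
      have h2 : 0 ≤ al * (n:ℝ) := mul_nonneg hal.le hn'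
      have hd : (al+be)*(m:ℝ)^2 - 2*al*m*n + (al+ga)*n^2 + m*(P+(al+be)) + n*(R-al)
          = ((al+be)*((m:ℝ)+1)^2 - 2*al*((m:ℝ)+1)*n + (al+ga)*n^2 + ((m:ℝ)+1)*(P+(al+be)) + n*(R-al))
            + (-2*(al+be)*((m:ℝ)+1) + 2*al*(n:ℝ) - P) := by ring
      rw [hd]; linarith
    · -- -1 ≤ m ≤ 0, 2 ≤ n : step to (m, n-1)
      have hih := ih m (n-1) (by omega)
      have hm'' : ((m:ℝ)) ≤ 0 := by exact_mod_cast hm2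
      have hn' : (2:ℝ) ≤ (n:ℝ) := by exact_mod_cast hn
      push_cast at hih ⊢
      have h1 : 0 ≤ (al+ga)*((n:ℝ)-2) := mul_nonneg (by linarith) (by linarith)
      have h2 : 0 ≤ al * (-(m:ℝ)) := mul_nonneg hal.le (by linarith)
      have hd : (al+be)*(m:ℝ)^2 - 2*al*m*n + (al+ga)*n^2 + m*(P+(al+be)) + n*(R-al)
          = ((al+be)*(m:ℝ)^2 - 2*al*m*((n:ℝ)-1) + (al+ga)*((n:ℝ)-1)^2 + m*(P+(al+be)) + ((n:ℝ)-1)*(R-al))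
            + ((al+ga)*(2*(n:ℝ)-1) - 2*al*(m:ℝ) + R - al) := by ring
      rw [hd]; linarith
    · -- (-1, 1) : step to (-1, 0)
      have hih := ih (-1) 0 (by omega)
      push_cast at hih ⊢
      norm_num at hih ⊢
      linarith
    · -- -1 ≤ m ≤ 0, n ≤ -2 : step to (m, n+1)
      have hih := ih m (n+1) (by omega)
      have hm' : (-1:ℝ) ≤ (m:ℝ) := by exact_mod_cast hm1
      have hn' : ((n:ℝ)) ≤ -2 := by exact_mod_cast hn
      push_cast at hih ⊢
      have h1 : 0 ≤ (al+ga)*(-(n:ℝ)-2) := mul_nonneg (by linarith) (by linarith)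
      have h2 : 0 ≤ al * ((m:ℝ)+1) := mul_nonneg hal.le (by linarith)
      have hd : (al+be)*(m:ℝ)^2 - 2*al*m*n + (al+ga)*n^2 + m*(P+(al+be)) + n*(R-al)
          = ((al+be)*(m:ℝ)^2 - 2*al*m*((n:ℝ)+1) + (al+ga)*((n:ℝ)+1)^2 + m*(P+(al+be)) + ((n:ℝ)+1)*(R-al))
            + ((al+ga)*(-2*(n:ℝ)-1) + 2*al*(m:ℝ) - R + al) := by ring
      rw [hd]; linarith
    · -- (0, -1) : step to (0, 0)
      have hih := ih 0 0 (by omega)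
      push_cast at hih ⊢
      norm_num at hih ⊢
      linarith



def mA (ga P R : ℝ) : ℝ := min (-(|P|/2)) (ga - |P/2 + R|)
def mC (al P R : ℝ) : ℝ := min (-(|P+R|/2)) (al - |R - P|/2)

lemma min_shift (ga P R : ℝ) :
    P/2 + min 0 (min (-P) (min (ga + R) (ga - P - R))) = mA ga P R := by
  unfold mA
  have h1 := le_abs_self P; have h2 := neg_abs_le P
  have h3 := le_abs_self (P/2+R); have h4 := neg_abs_le (P/2+R)
  have hb0 : min 0 (min (-P) (min (ga+R) (ga-P-R))) ≤ 0 := min_le_left _ _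
  have hb1 : min 0 (min (-P) (min (ga+R) (ga-P-R))) ≤ -P :=
    le_trans (min_le_right _ _) (min_le_left _ _)
  have hb2 : min 0 (min (-P) (min (ga+R) (ga-P-R))) ≤ ga+R :=
    le_trans (min_le_right _ _) (le_trans (min_le_right _ _) (min_le_left _ _))
  have hb3 : min 0 (min (-P) (min (ga+R) (ga-P-R))) ≤ ga-P-R :=
    le_trans (min_le_right _ _) (le_trans (min_le_right _ _) (min_le_right _ _))
  have hr1 : min (-(|P|/2)) (ga - |P/2 + R|) ≤ -(|P|/2) := min_le_left _ _
  have hr2 : min (-(|P|/2)) (ga - |P/2 + R|) ≤ ga - |P/2+R| := min_le_right _ _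
  apply le_antisymm
  · apply le_min
    · rcases abs_cases P with ⟨h, _⟩ | ⟨h, _⟩ <;> rw [h] <;> linarith
    · rcases abs_cases (P/2+R) with ⟨h, _⟩ | ⟨h, _⟩ <;> rw [h] <;> linarith
  · have key : min (-(|P|/2)) (ga - |P/2 + R|) - P/2 ≤ min 0 (min (-P) (min (ga+R) (ga-P-R))) := by
      refine le_min (by linarith) (le_min (by linarith) (le_min (by linarith) (by linarith)))
    linarith

lemma ip_self_nonneg (y : ℝ × ℝ) : 0 ≤ ip y y := by
  simp only [ip]; nlinarith [mul_self_nonneg y.1, mul_self_nonneg y.2]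

lemma theta10_eq (u v w x : ℝ × ℝ) (hw : w = -u - v)
    (huv : ip u v < 0) (huw : ip u w < 0) (hvw : ip v w < 0)
    (h1 : |2 * ip x u| ≤ ip u u) (h2 : |2 * ip x v| ≤ ip v v)
    (h3 : |2 * ip x w| ≤ ip w w) :
    theta u v 1 0 x = ip u u / 4 + mA (ip v v + ip u v) (2 * ip x u) (2 * ip x v) := by
  have hwu : ip u w = -(ip u u) - ip u v := by
    rw [hw]; simp [ip, Prod.fst_sub, Prod.snd_sub, Prod.fst_neg, Prod.snd_neg]; ring
  have hwv : ip v w = -(ip u v) - ip v v := by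
    rw [hw]; simp [ip, Prod.fst_sub, Prod.snd_sub, Prod.fst_neg, Prod.snd_neg]; ring
  have hww : ip w w = ip u u + 2*ip u v + ip v v := by
    rw [hw]; simp [ip, Prod.fst_sub, Prod.snd_sub, Prod.fst_neg, Prod.snd_neg]; ring
  have hxw : ip x w = -(ip x u) - ip x v := by
    rw [hw]; simp [ip, Prod.fst_sub, Prod.snd_sub, Prod.fst_neg, Prod.snd_neg]; ring
  have hkey := descent4 (-(ip u v)) (ip u u + ip u v) (ip v v + ip u v)
      (2 * ip x u) (2 * ip x v) (by linarith) (by linarith) (by linarith)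
      (by linarith) (by linarith)
      (by
        have habs : |2*ip x u + 2*ip x v| = |2 * ip x w| := by
          rw [show 2*ip x w = -(2*ip x u + 2*ip x v) by linarith, abs_neg]
        linarith)
  set M := min 0 (min (-(2 * ip x u)) (min ((ip v v + ip u v) + 2 * ip x v)
      ((ip v v + ip u v) - 2 * ip x u - 2 * ip x v))) with hM
  have hM0 : M ≤ 0 := min_le_left _ _
  have hM1 : M ≤ -(2*ip x u) := le_trans (min_le_right _ _) (min_le_left _ _)
  have hM2 : M ≤ (ip v v + ip u v) + 2*ip x v :=
    le_trans (min_le_right _ _) (le_trans (min_le_right _ _) (min_le_left _ _))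
  have hM3 : M ≤ (ip v v + ip u v) - 2*ip x u - 2*ip x v :=
    le_trans (min_le_right _ _) (le_trans (min_le_right _ _) (min_le_right _ _))
  unfold theta
  set S := {t : ℝ | ∃ p ∈ lat u v,
      t = ip (x + p + ((1:ℝ) / 2) • u + ((0:ℝ) / 2) • v)
        (x + p + ((1:ℝ) / 2) • u + ((0:ℝ) / 2) • v)} with hS
  set c : ℝ := ip x x + ip x u + ip u u / 4 with hc
  have hmem : ∀ m n : ℤ, ip (x + ((m:ℝ) • u + (n:ℝ) • v) + ((1:ℝ)/2) • u + ((0:ℝ)/2) • v)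
      (x + ((m:ℝ) • u + (n:ℝ) • v) + ((1:ℝ)/2) • u + ((0:ℝ)/2) • v) ∈ S := by
    intro m n; exact ⟨_, ⟨m, n, rfl⟩, rfl⟩
  have hexp : ∀ m n : ℤ, ip (x + ((m:ℝ) • u + (n:ℝ) • v) + ((1:ℝ)/2) • u + ((0:ℝ)/2) • v)
      (x + ((m:ℝ) • u + (n:ℝ) • v) + ((1:ℝ)/2) • u + ((0:ℝ)/2) • v)
      = c + ((-(ip u v)+(ip u u + ip u v))*(m:ℝ)^2 - 2*(-(ip u v))*(m:ℝ)*(n:ℝ)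
          + (-(ip u v)+(ip v v + ip u v))*(n:ℝ)^2
          + (m:ℝ)*((2*ip x u)+(-(ip u v)+(ip u u + ip u v)))
          + (n:ℝ)*((2*ip x v)-(-(ip u v)))) := by
    intro m n
    simp only [hc, ip, Prod.fst_add, Prod.snd_add, Prod.smul_fst, Prod.smul_snd, smul_eq_mul]
    ring
  have hlb : ∀ t ∈ S, c + M ≤ t := by
    rintro t ⟨p, ⟨m, n, rfl⟩, rfl⟩
    rw [hexp m n]
    have := hkey m n
    linarith
  have hub : sInf S ≤ c + M := by
    have b0 : sInf S ≤ c + 0 := by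
      have := csInf_le ⟨c + M, hlb⟩ (hmem 0 0)
      rw [hexp 0 0] at this; push_cast at this; linarith
    have b1 : sInf S ≤ c + -(2 * ip x u) := by
      have := csInf_le ⟨c + M, hlb⟩ (hmem (-1) 0)
      rw [hexp (-1) 0] at this; push_cast at this; linarith
    have b2 : sInf S ≤ c + ((ip v v + ip u v) + 2 * ip x v) := by
      have := csInf_le ⟨c + M, hlb⟩ (hmem 0 1)
      rw [hexp 0 1] at this; push_cast at this; linarith
    have b3 : sInf S ≤ c + ((ip v v + ip u v) - 2 * ip x u - 2 * ip x v) := by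
      have := csInf_le ⟨c + M, hlb⟩ (hmem (-1) (-1))
      rw [hexp (-1) (-1)] at this; push_cast at this; linarith
    rcases min_cases 0 (min (-(2 * ip x u)) (min ((ip v v + ip u v) + 2 * ip x v)
        ((ip v v + ip u v) - 2 * ip x u - 2 * ip x v))) with ⟨hmin, _⟩ | ⟨hmin, _⟩
    · rw [hM, hmin]; exact b0
    · rw [hM, hmin]
      rcases min_cases (-(2 * ip x u)) (min ((ip v v + ip u v) + 2 * ip x v)
          ((ip v v + ip u v) - 2 * ip x u - 2 * ip x v)) with ⟨hmin2, _⟩ | ⟨hmin2, _⟩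
      · rw [hmin2]; exact b1
      · rw [hmin2]
        rcases min_cases ((ip v v + ip u v) + 2 * ip x v)
            ((ip v v + ip u v) - 2 * ip x u - 2 * ip x v) with ⟨hmin3, _⟩ | ⟨hmin3, _⟩
        · rw [hmin3]; exact b2
        · rw [hmin3]; exact b3
  have hinf : sInf S = c + M := le_antisymm hub (le_csInf ⟨_, hmem 0 0⟩ hlb)
  rw [hinf]
  have := min_shift (ip v v + ip u v) (2 * ip x u) (2 * ip x v)
  rw [hM, hc]
  linarith [this]

lemma theta00_eq (u v w x : ℝ × ℝ) (hw : w = -u - v)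
    (huv : ip u v < 0) (huw : ip u w < 0) (hvw : ip v w < 0)
    (h1 : |2 * ip x u| ≤ ip u u) (h2 : |2 * ip x v| ≤ ip v v)
    (h3 : |2 * ip x w| ≤ ip w w) :
    theta u v 0 0 x = 0 := by
  have hwu : ip u w = -(ip u u) - ip u v := by
    rw [hw]; simp [ip, Prod.fst_sub, Prod.snd_sub, Prod.fst_neg, Prod.snd_neg]; ring
  have hwv : ip v w = -(ip u v) - ip v v := by
    rw [hw]; simp [ip, Prod.fst_sub, Prod.snd_sub, Prod.fst_neg, Prod.snd_neg]; ring
  have hxw : ip x w = -(ip x u) - ip x v := by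
    rw [hw]; simp [ip, Prod.fst_sub, Prod.snd_sub, Prod.fst_neg, Prod.snd_neg]; ring
  have hww : ip w w = ip u u + 2*ip u v + ip v v := by
    rw [hw]; simp [ip, Prod.fst_sub, Prod.snd_sub, Prod.fst_neg, Prod.snd_neg]; ring
  have hkey := descent0 (-(ip u v)) (ip u u + ip u v) (ip v v + ip u v)
      (2 * ip x u) (2 * ip x v) (by linarith) (by linarith) (by linarith)
      (by linarith) (by linarith)
      (by
        have habs : |2*ip x u + 2*ip x v| = |2 * ip x w| := by
          rw [show 2*ip x w = -(2*ip x u + 2*ip x v) by linarith, abs_neg]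
        linarith)
  unfold theta
  set S := {t : ℝ | ∃ p ∈ lat u v,
      t = ip (x + p + ((0:ℝ) / 2) • u + ((0:ℝ) / 2) • v)
        (x + p + ((0:ℝ) / 2) • u + ((0:ℝ) / 2) • v)} with hS
  have hmem : ∀ m n : ℤ, ip (x + ((m:ℝ) • u + (n:ℝ) • v) + ((0:ℝ)/2) • u + ((0:ℝ)/2) • v)
      (x + ((m:ℝ) • u + (n:ℝ) • v) + ((0:ℝ)/2) • u + ((0:ℝ)/2) • v) ∈ S := by
    intro m n; exact ⟨_, ⟨m, n, rfl⟩, rfl⟩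
  have hexp : ∀ m n : ℤ, ip (x + ((m:ℝ) • u + (n:ℝ) • v) + ((0:ℝ)/2) • u + ((0:ℝ)/2) • v)
      (x + ((m:ℝ) • u + (n:ℝ) • v) + ((0:ℝ)/2) • u + ((0:ℝ)/2) • v)
      = ip x x + ((-(ip u v)+(ip u u + ip u v))*(m:ℝ)^2 - 2*(-(ip u v))*(m:ℝ)*(n:ℝ)
          + (-(ip u v)+(ip v v + ip u v))*(n:ℝ)^2
          + (m:ℝ)*(2*ip x u) + (n:ℝ)*(2*ip x v)) := by
    intro m n
    simp only [ip, Prod.fst_add, Prod.snd_add, Prod.smul_fst, Prod.smul_snd, smul_eq_mul]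
    ring
  have hlb : ∀ t ∈ S, ip x x ≤ t := by
    rintro t ⟨p, ⟨m, n, rfl⟩, rfl⟩
    rw [hexp m n]
    have := hkey m n
    linarith
  have hub : sInf S ≤ ip x x := by
    have := csInf_le ⟨ip x x, hlb⟩ (hmem 0 0)
    rw [hexp 0 0] at this; push_cast at this; linarith
  have : sInf S = ip x x := le_antisymm hub (le_csInf ⟨_, hmem 0 0⟩ hlb)
  rw [this]; ring

lemma theta01_swap (u v x : ℝ × ℝ) : theta u v 0 1 x = theta v u 1 0 x := by
  unfold theta
  congr 1
  congr 1
  ext t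
  constructor
  · rintro ⟨p, ⟨m, n, rfl⟩, rfl⟩
    refine ⟨_, ⟨n, m, rfl⟩, ?_⟩
    simp only [ip, Prod.fst_add, Prod.snd_add, Prod.smul_fst, Prod.smul_snd, smul_eq_mul]
    ring
  · rintro ⟨p, ⟨m, n, rfl⟩, rfl⟩
    refine ⟨_, ⟨n, m, rfl⟩, ?_⟩
    simp only [ip, Prod.fst_add, Prod.snd_add, Prod.smul_fst, Prod.smul_snd, smul_eq_mul]
    ring

lemma theta11_swap (u v w x : ℝ × ℝ) (hw : w = -u - v) :
    theta u v 1 1 x = theta w v 1 0 x := by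
  unfold theta
  congr 1
  congr 1
  ext t
  constructor
  · rintro ⟨p, ⟨m, n, rfl⟩, rfl⟩
    refine ⟨_, ⟨-m-1, n-m, rfl⟩, ?_⟩
    subst hw
    push_cast
    simp only [ip, Prod.fst_add, Prod.snd_add, Prod.smul_fst, Prod.smul_snd, smul_eq_mul,
        Prod.fst_sub, Prod.snd_sub, Prod.fst_neg, Prod.snd_neg]
    ring
  · rintro ⟨p, ⟨m, n, rfl⟩, rfl⟩
    refine ⟨_, ⟨-m-1, n-m-1, rfl⟩, ?_⟩
    subst hw
    push_cast
    simp only [ip, Prod.fst_add, Prod.snd_add, Prod.smul_fst, Prod.smul_snd, smul_eq_mul,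
        Prod.fst_sub, Prod.snd_sub, Prod.fst_neg, Prod.snd_neg]
    ring

lemma ip_comm (a b : ℝ × ℝ) : ip a b = ip b a := by simp [ip]; ring



/-- The full formula for the tropical Kummer map on the Voronoi cell. -/
lemma phi_formula (u v w x : ℝ × ℝ) (hw : w = -u - v)
    (huv : ip u v < 0) (huw : ip u w < 0) (hvw : ip v w < 0)
    (h1 : |2 * ip x u| ≤ ip u u) (h2 : |2 * ip x v| ≤ ip v v)
    (h3 : |2 * ip x w| ≤ ip w w) :
    phiMap u v x = (ip u u / 4 + mA (ip v v + ip u v) (2 * ip x u) (2 * ip x v),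
      ip v v / 4 + mA (ip u u + ip u v) (2 * ip x v) (2 * ip x u),
      ip w w / 4 + mC (-(ip u v)) (2 * ip x u) (2 * ip x v)) := by
  have hwu : ip u w = -(ip u u) - ip u v := by
    rw [hw]; simp [ip, Prod.fst_sub, Prod.snd_sub, Prod.fst_neg, Prod.snd_neg]; ring
  have hwv : ip v w = -(ip u v) - ip v v := by
    rw [hw]; simp [ip, Prod.fst_sub, Prod.snd_sub, Prod.fst_neg, Prod.snd_neg]; ring
  have hxw : ip x w = -(ip x u) - ip x v := by
    rw [hw]; simp [ip, Prod.fst_sub, Prod.snd_sub, Prod.fst_neg, Prod.snd_neg]; ring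
  have hww : ip w w = ip u u + 2*ip u v + ip v v := by
    rw [hw]; simp [ip, Prod.fst_sub, Prod.snd_sub, Prod.fst_neg, Prod.snd_neg]; ring
  have hwv' : w = -v - u := by rw [hw]; abel
  have huw' : u = -w - v := by rw [hw]; abel
  have h00 : theta u v 0 0 x = 0 := theta00_eq u v w x hw huv huw hvw h1 h2 h3
  have h10 : theta u v 1 0 x = ip u u / 4 + mA (ip v v + ip u v) (2 * ip x u) (2 * ip x v) :=
    theta10_eq u v w x hw huv huw hvw h1 h2 h3
  have h01 : theta u v 0 1 x = ip v v / 4 + mA (ip u u + ip u v) (2 * ip x v) (2 * ip x u) := by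
    rw [theta01_swap]
    rw [theta10_eq v u w x hwv' (by rw [ip_comm]; exact huv) hvw huw h2 h1 h3]
    rw [ip_comm v u]
  have h11 : theta u v 1 1 x = ip w w / 4 + mC (-(ip u v)) (2 * ip x u) (2 * ip x v) := by
    rw [theta11_swap u v w x hw]
    rw [theta10_eq w v u x huw' (by rw [ip_comm]; exact hvw) (by rw [ip_comm]; exact huw)
      (by rw [ip_comm]; exact huv) h3 h2 h1]
    have e1 : ip v v + ip w v = -(ip u v) := by rw [ip_comm w v]; linarith
    have e2 : mA (-(ip u v)) (2 * ip x w) (2 * ip x v) = mC (-(ip u v)) (2 * ip x u) (2 * ip x v) := by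
      unfold mA mC
      have a1 : |2 * ip x w| = |2 * ip x u + 2 * ip x v| := by
        rw [show 2 * ip x w = -(2 * ip x u + 2 * ip x v) by linarith, abs_neg]
      have a2 : |2 * ip x w / 2 + 2 * ip x v| = |2 * ip x v - 2 * ip x u| / 2 := by
        rw [show 2 * ip x w / 2 + 2 * ip x v = (2 * ip x v - 2 * ip x u)/2 by linarith]
        rw [abs_div]
        norm_num
      rw [a1, a2]
    rw [e1, e2]
  unfold phiMap
  rw [h00, h10, h01, h11]
  norm_num



/-- Translating the argument by a lattice vector shifts `theta` by an explicit constant. -/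
lemma theta_translate (u v x : ℝ × ℝ) (j₁ j₂ : ℝ) (m₀ n₀ : ℤ) :
    theta u v j₁ j₂ (x + ((m₀:ℝ) • u + (n₀:ℝ) • v)) =
      theta u v j₁ j₂ x + ip x x - ip (x + ((m₀:ℝ) • u + (n₀:ℝ) • v)) (x + ((m₀:ℝ) • u + (n₀:ℝ) • v)) := by
  unfold theta
  have hset : {t : ℝ | ∃ p ∈ lat u v,
      t = ip (x + ((m₀:ℝ) • u + (n₀:ℝ) • v) + p + (j₁ / 2) • u + (j₂ / 2) • v)
        (x + ((m₀:ℝ) • u + (n₀:ℝ) • v) + p + (j₁ / 2) • u + (j₂ / 2) • v)} =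
      {t : ℝ | ∃ p ∈ lat u v,
      t = ip (x + p + (j₁ / 2) • u + (j₂ / 2) • v) (x + p + (j₁ / 2) • u + (j₂ / 2) • v)} := by
    ext t
    constructor
    · rintro ⟨p, ⟨m, n, rfl⟩, rfl⟩
      refine ⟨_, ⟨m + m₀, n + n₀, rfl⟩, ?_⟩
      push_cast
      simp only [ip, Prod.fst_add, Prod.snd_add, Prod.smul_fst, Prod.smul_snd, smul_eq_mul]
      ring
    · rintro ⟨p, ⟨m, n, rfl⟩, rfl⟩
      refine ⟨_, ⟨m - m₀, n - n₀, rfl⟩, ?_⟩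
      push_cast
      simp only [ip, Prod.fst_add, Prod.snd_add, Prod.smul_fst, Prod.smul_snd, smul_eq_mul]
      ring
  rw [hset]
  ring

lemma phi_translate (u v x : ℝ × ℝ) (m₀ n₀ : ℤ) :
    phiMap u v (x + ((m₀:ℝ) • u + (n₀:ℝ) • v)) = phiMap u v x := by
  unfold phiMap
  rw [theta_translate u v x 1 0, theta_translate u v x 0 1, theta_translate u v x 1 1,
    theta_translate u v x 0 0]
  norm_num

lemma half_bound (a b : ℝ × ℝ) : ip b b / 2 - ip a a ≤ ip (a + b) (a + b) := by
  simp only [ip, Prod.fst_add, Prod.snd_add]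
  nlinarith [sq_nonneg (2*a.1 + b.1), sq_nonneg (2*a.2 + b.2)]

/-- Reduction of an arbitrary point to the Voronoi cell without changing `phiMap`. -/
lemma reduce (u v w x : ℝ × ℝ) (hw : w = -u - v)
    (huv : ip u v < 0) (huw : ip u w < 0) (hvw : ip v w < 0) :
    ∃ x₀ : ℝ × ℝ, phiMap u v x = phiMap u v x₀ ∧
      |2 * ip x₀ u| ≤ ip u u ∧ |2 * ip x₀ v| ≤ ip v v ∧ |2 * ip x₀ w| ≤ ip w w := by
  have hwu : ip u w = -(ip u u) - ip u v := by
    rw [hw]; simp [ip, Prod.fst_sub, Prod.snd_sub, Prod.fst_neg, Prod.snd_neg]; ring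
  have hwv : ip v w = -(ip u v) - ip v v := by
    rw [hw]; simp [ip, Prod.fst_sub, Prod.snd_sub, Prod.fst_neg, Prod.snd_neg]; ring
  set be : ℝ := ip u u + ip u v with hbe
  set ga : ℝ := ip v v + ip u v with hga
  have hbe0 : 0 < be := by rw [hbe]; linarith
  have hga0 : 0 < ga := by rw [hga]; linarith
  clear_value be ga
  set Qf : ℤ → ℤ → ℝ := fun m n => ip (x + ((m:ℝ) • u + (n:ℝ) • v)) (x + ((m:ℝ) • u + (n:ℝ) • v))
    with hQf
  clear_value Qf
  have hcoer : ∀ m n : ℤ, (be*(m:ℝ)^2 + ga*(n:ℝ)^2)/2 - ip x x ≤ Qf m n := by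
    intro m n
    have h1 := half_bound x ((m:ℝ) • u + (n:ℝ) • v)
    have h2 : be*(m:ℝ)^2 + ga*(n:ℝ)^2 ≤ ip ((m:ℝ) • u + (n:ℝ) • v) ((m:ℝ) • u + (n:ℝ) • v) := by
      have hq : ip ((m:ℝ) • u + (n:ℝ) • v) ((m:ℝ) • u + (n:ℝ) • v)
          = (ip u u)*(m:ℝ)^2 + 2*(ip u v)*(m:ℝ)*(n:ℝ) + (ip v v)*(n:ℝ)^2 := by
        simp only [ip, Prod.fst_add, Prod.snd_add, Prod.smul_fst, Prod.smul_snd, smul_eq_mul]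
        ring
      rw [hq, hbe, hga]
      nlinarith [mul_nonneg (by linarith : (0:ℝ) ≤ -(ip u v)) (sq_nonneg ((m:ℝ) - (n:ℝ)))]
    have h3 : Qf m n = ip (x + ((m:ℝ) • u + (n:ℝ) • v)) (x + ((m:ℝ) • u + (n:ℝ) • v)) := by
      rw [hQf]
    rw [h3]
    linarith
  -- choose a cutoff
  obtain ⟨N, hN⟩ := exists_nat_gt (4 * ip x x / be + 4 * ip x x / ga + 1)
  have hQx0 : 0 ≤ ip x x := by
    simp only [ip]; nlinarith [mul_self_nonneg x.1, mul_self_nonneg x.2]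
  have hout : ∀ m n : ℤ, ((N:ℤ) < |m| ∨ (N:ℤ) < |n|) → ip x x < Qf m n := by
    intro m n hmn
    have hco := hcoer m n
    have hsq : ∀ k : ℤ, (N:ℤ) < |k| → (N:ℝ) + 1 ≤ (k:ℝ)^2 := by
      intro k hk
      have h1 : (N:ℤ) + 1 ≤ |k| := by omega
      have h2 : ((N:ℝ) + 1) ≤ |(k:ℝ)| := by
        rw [← Int.cast_abs]; exact_mod_cast h1
      have h3 : |(k:ℝ)| ≤ (k:ℝ)^2 := by
        nlinarith [abs_nonneg (k:ℝ), sq_abs (k:ℝ), h2, Nat.cast_nonneg (α := ℝ) N]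
      linarith
    have hNbe : 4 * ip x x / be < (N:ℝ) + 1 := by
      have : 0 ≤ 4 * ip x x / ga := by positivity
      linarith
    have hNga : 4 * ip x x / ga < (N:ℝ) + 1 := by
      have : 0 ≤ 4 * ip x x / be := by positivity
      linarith
    have hbe2 : 0 ≤ be*(m:ℝ)^2 := by positivity
    have hga2 : 0 ≤ ga*(n:ℝ)^2 := by positivity
    rcases hmn with hm | hn
    · have := hsq m hm
      have h4 : 4 * ip x x < be * (m:ℝ)^2 := by
        rw [div_lt_iff₀ hbe0] at hNbe
        nlinarith
      linarith
    · have := hsq n hn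
      have h4 : 4 * ip x x < ga * (n:ℝ)^2 := by
        rw [div_lt_iff₀ hga0] at hNga
        nlinarith
      linarith
  -- minimize over the finite box
  have hne : ((Finset.Icc (-(N:ℤ)) N) ×ˢ (Finset.Icc (-(N:ℤ)) N)).Nonempty := by
    refine ⟨(0,0), ?_⟩
    simp only [Finset.mem_product, Finset.mem_Icc]
    omega
  obtain ⟨⟨m₀, n₀⟩, hmem, hminF⟩ :=
    ((Finset.Icc (-(N:ℤ)) N) ×ˢ (Finset.Icc (-(N:ℤ)) N)).exists_min_image
      (fun p => Qf p.1 p.2) hne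
  have hQ00 : Qf 0 0 = ip x x := by
    simp only [hQf]
    push_cast
    simp
  have hglobal : ∀ m n : ℤ, Qf m₀ n₀ ≤ Qf m n := by
    intro m n
    by_cases hin : (m, n) ∈ (Finset.Icc (-(N:ℤ)) N) ×ˢ (Finset.Icc (-(N:ℤ)) N)
    · exact hminF (m, n) hin
    · have : (N:ℤ) < |m| ∨ (N:ℤ) < |n| := by
        by_contra hcon
        push_neg at hcon
        obtain ⟨ha, hb⟩ := hcon
        rw [abs_le] at ha hb
        exact hin (by simp only [Finset.mem_product, Finset.mem_Icc]; omega)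
      have h1 := hout m n this
      have h2 := hminF (0,0) (by simp only [Finset.mem_product, Finset.mem_Icc]; omega)
      rw [hQ00] at h2
      exact le_of_lt (lt_of_le_of_lt h2 h1)
  -- the reduced point
  set x₀ : ℝ × ℝ := x + ((m₀:ℝ) • u + (n₀:ℝ) • v) with hx₀
  refine ⟨x₀, (phi_translate u v x m₀ n₀).symm, ?_, ?_, ?_⟩
  · have hp := hglobal (m₀+1) n₀
    have hm := hglobal (m₀-1) n₀
    have e1 : Qf (m₀+1) n₀ = ip x₀ x₀ + 2 * ip x₀ u + ip u u := by
      simp only [hQf, hx₀, ip, Prod.fst_add, Prod.snd_add, Prod.smul_fst, Prod.smul_snd,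
        smul_eq_mul]
      push_cast
      ring
    have e2 : Qf (m₀-1) n₀ = ip x₀ x₀ - 2 * ip x₀ u + ip u u := by
      simp only [hQf, hx₀, ip, Prod.fst_add, Prod.snd_add, Prod.smul_fst, Prod.smul_snd,
        smul_eq_mul]
      push_cast
      ring
    have e0 : Qf m₀ n₀ = ip x₀ x₀ := by rw [hQf, hx₀]
    rw [e1] at hp; rw [e2] at hm; rw [e0] at hp hm
    exact abs_le.2 ⟨by linarith, by linarith⟩
  · have hp := hglobal m₀ (n₀+1)
    have hm := hglobal m₀ (n₀-1)
    have e1 : Qf m₀ (n₀+1) = ip x₀ x₀ + 2 * ip x₀ v + ip v v := by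
      simp only [hQf, hx₀, ip, Prod.fst_add, Prod.snd_add, Prod.smul_fst, Prod.smul_snd,
        smul_eq_mul]
      push_cast
      ring
    have e2 : Qf m₀ (n₀-1) = ip x₀ x₀ - 2 * ip x₀ v + ip v v := by
      simp only [hQf, hx₀, ip, Prod.fst_add, Prod.snd_add, Prod.smul_fst, Prod.smul_snd,
        smul_eq_mul]
      push_cast
      ring
    have e0 : Qf m₀ n₀ = ip x₀ x₀ := by rw [hQf, hx₀]
    rw [e1] at hp; rw [e2] at hm; rw [e0] at hp hm
    exact abs_le.2 ⟨by linarith, by linarith⟩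
  · have hp := hglobal (m₀-1) (n₀-1)
    have hm := hglobal (m₀+1) (n₀+1)
    have e1 : Qf (m₀-1) (n₀-1) = ip x₀ x₀ + 2 * ip x₀ w + ip w w := by
      simp only [hQf, hx₀, hw, ip, Prod.fst_add, Prod.snd_add, Prod.smul_fst, Prod.smul_snd,
        smul_eq_mul, Prod.fst_sub, Prod.snd_sub, Prod.fst_neg, Prod.snd_neg]
      push_cast
      ring
    have e2 : Qf (m₀+1) (n₀+1) = ip x₀ x₀ - 2 * ip x₀ w + ip w w := by
      simp only [hQf, hx₀, hw, ip, Prod.fst_add, Prod.snd_add, Prod.smul_fst, Prod.smul_snd,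
        smul_eq_mul, Prod.fst_sub, Prod.snd_sub, Prod.fst_neg, Prod.snd_neg]
      push_cast
      ring
    have e0 : Qf m₀ n₀ = ip x₀ x₀ := by rw [hQf, hx₀]
    rw [e1] at hp; rw [e2] at hm; rw [e0] at hp hm
    exact abs_le.2 ⟨by linarith, by linarith⟩

lemma core (al be ga P R : ℝ) (hal : 0 < al) (hbe : 0 < be) (hga : 0 < ga)
    (hPA : P ≤ al + be) (hR : |R| ≤ al + ga) (hPRW : P + R ≤ be + ga)
    (hP0 : 0 ≤ P) (hPR0 : 0 ≤ P + R) :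
    (-al ≤ mA ga P R + mA be R P - mC al P R ∧ mA ga P R + mA be R P - mC al P R ≤ 0) ∧
    (-be ≤ mA ga P R - mA be R P + mC al P R ∧ mA ga P R - mA be R P + mC al P R ≤ 0) ∧
    (0 ≤ mA ga P R - mA be R P - mC al P R ∧ mA ga P R - mA be R P - mC al P R ≤ ga) ∧
    (mA ga P R + mA be R P - mC al P R = 0 ∨ mA ga P R + mA be R P - mC al P R = -al ∨
     mA ga P R - mA be R P + mC al P R = 0 ∨ mA ga P R - mA be R P + mC al P R = -be ∨
     mA ga P R - mA be R P - mC al P R = 0 ∨ mA ga P R - mA be R P - mC al P R = ga) := by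
  unfold mA mC
  obtain ⟨hR1, hR2⟩ := abs_le.1 hR
  have haP : |P| = P := abs_of_nonneg hP0
  have haPR : |P+R| = P+R := abs_of_nonneg hPR0
  rw [haP, haPR]
  rcases le_total 0 R with hR0 | hR0
  · -- Sector I : R ≥ 0
    have haR : |R| = R := abs_of_nonneg hR0
    have ha1 : |P/2 + R| = P/2 + R := abs_of_nonneg (by linarith)
    have ha2 : |R/2 + P| = R/2 + P := abs_of_nonneg (by linarith)
    have ha3 : |R - P| ≤ 2*al + P + R := abs_le.2 ⟨by linarith, by linarith⟩
    have hm3 : min (-((P+R)/2)) (al - |R - P|/2) = -((P+R)/2) :=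
      min_eq_left (by linarith)
    rw [haR, ha1, ha2, hm3]
    rcases le_total R ga with hRg | hRg
    · rcases le_total P be with hPb | hPb
      · -- I.1
        have hm1 : min (-(P/2)) (ga - (P/2 + R)) = -(P/2) := min_eq_left (by linarith)
        have hm2 : min (-(R/2)) (be - (R/2 + P)) = -(R/2) := min_eq_left (by linarith)
        rw [hm1, hm2]
        refine ⟨⟨by linarith, by linarith⟩, ⟨by linarith, by linarith⟩,
          ⟨by linarith, by linarith⟩, Or.inl (by ring)⟩
      · -- I.3 : P ≥ be
        have hm1 : min (-(P/2)) (ga - (P/2 + R)) = -(P/2) := min_eq_left (by linarith)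
        have hm2 : min (-(R/2)) (be - (R/2 + P)) = be - (R/2 + P) := min_eq_right (by linarith)
        rw [hm1, hm2]
        refine ⟨⟨by linarith, by linarith⟩, ⟨by linarith, by linarith⟩,
          ⟨by linarith, by linarith⟩, Or.inr (Or.inr (Or.inr (Or.inl (by ring))))⟩
    · -- I.2 : R ≥ ga, hence P ≤ be
      have hPb : P ≤ be := by linarith
      have hm1 : min (-(P/2)) (ga - (P/2 + R)) = ga - (P/2 + R) := min_eq_right (by linarith)
      have hm2 : min (-(R/2)) (be - (R/2 + P)) = -(R/2) := min_eq_left (by linarith)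
      rw [hm1, hm2]
      refine ⟨⟨by linarith, by linarith⟩, ⟨by linarith, by linarith⟩,
        ⟨by linarith, by linarith⟩, Or.inr (Or.inr (Or.inr (Or.inr (Or.inr (by ring)))))⟩
  · -- Sector II : R ≤ 0
    have haR : |R| = -R := abs_of_nonpos hR0
    have ha1 : |P/2 + R| ≤ ga + P/2 := abs_le.2 ⟨by linarith, by linarith⟩
    have ha2 : |R/2 + P| = R/2 + P := abs_of_nonneg (by linarith)
    have ha3 : |R - P| = P - R := by rw [abs_sub_comm]; exact abs_of_nonneg (by linarith)
    have hm1 : min (-(P/2)) (ga - |P/2 + R|) = -(P/2) := min_eq_left (by linarith)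
    rw [haR, ha2, ha3, hm1]
    rcases le_total (P+R) be with hPRb | hPRb
    · rcases le_total (-al) R with hRa | hRa
      · -- II.a1
        have hm2 : min (-((-R)/2)) (be - (R/2 + P)) = -((-R)/2) := min_eq_left (by linarith)
        have hm3 : min (-((P+R)/2)) (al - (P - R)/2) = -((P+R)/2) := min_eq_left (by linarith)
        rw [hm2, hm3]
        refine ⟨⟨by linarith, by linarith⟩, ⟨by linarith, by linarith⟩,
          ⟨by linarith, by linarith⟩, Or.inr (Or.inr (Or.inr (Or.inr (Or.inl (by ring)))))⟩
      · -- II.b : R ≤ -al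
        have hm2 : min (-((-R)/2)) (be - (R/2 + P)) = -((-R)/2) := min_eq_left (by linarith)
        have hm3 : min (-((P+R)/2)) (al - (P - R)/2) = al - (P - R)/2 := min_eq_right (by linarith)
        rw [hm2, hm3]
        have hPal : al ≤ P := by linarith
        refine ⟨⟨by linarith, by linarith⟩, ⟨by linarith, by linarith⟩,
          ⟨by linarith, by linarith⟩, Or.inr (Or.inl (by ring))⟩
    · -- II.a2 : P + R ≥ be, hence R ≥ -al
      have hRa : -al ≤ R := by linarith
      have hm2 : min (-((-R)/2)) (be - (R/2 + P)) = be - (R/2 + P) := min_eq_right (by linarith)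
      have hm3 : min (-((P+R)/2)) (al - (P - R)/2) = -((P+R)/2) := min_eq_left (by linarith)
      rw [hm2, hm3]
      have hPbe : be ≤ P := by linarith
      refine ⟨⟨by linarith, by linarith⟩, ⟨by linarith, by linarith⟩,
        ⟨by linarith, by linarith⟩, Or.inr (Or.inr (Or.inr (Or.inl (by ring))))⟩

lemma mC_comm (al P R : ℝ) : mC al R P = mC al P R := by
  unfold mC
  rw [add_comm R P, abs_sub_comm P R]

lemma mA_neg (ga P R : ℝ) : mA ga (-P) (-R) = mA ga P R := by
  unfold mA
  rw [abs_neg, show (-P)/2 + -R = -(P/2 + R) by ring, abs_neg]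

lemma mC_neg (al P R : ℝ) : mC al (-P) (-R) = mC al P R := by
  unfold mC
  rw [show -P + -R = -(P + R) by ring, abs_neg, show -R - -P = -(R - P) by ring, abs_neg]

lemma half (al be ga P R : ℝ) (hal : 0 < al) (hbe : 0 < be) (hga : 0 < ga)
    (hP : |P| ≤ al + be) (hR : |R| ≤ al + ga) (hPR : |P + R| ≤ be + ga)
    (hPR0 : 0 ≤ P + R) :
    (-al ≤ mA ga P R + mA be R P - mC al P R ∧ mA ga P R + mA be R P - mC al P R ≤ 0) ∧
    (-be ≤ mA ga P R - mA be R P + mC al P R ∧ mA ga P R - mA be R P + mC al P R ≤ 0) ∧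
    (0 ≤ mA ga P R - mA be R P - mC al P R ∧ mA ga P R - mA be R P - mC al P R ≤ ga) ∧
    (mA ga P R + mA be R P - mC al P R = 0 ∨ mA ga P R + mA be R P - mC al P R = -al ∨
     mA ga P R - mA be R P + mC al P R = 0 ∨ mA ga P R - mA be R P + mC al P R = -be ∨
     mA ga P R - mA be R P - mC al P R = 0 ∨ mA ga P R - mA be R P - mC al P R = ga) := by
  rcases le_total 0 P with hP0 | hP0
  · exact core al be ga P R hal hbe hga (abs_le.1 hP).2 hR (abs_le.1 hPR).2 hP0 hPR0
  · have hR0 : 0 ≤ R := by linarith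
    have h := core al ga be R P hal hga hbe (abs_le.1 hR).2 hP
      (by have := (abs_le.1 hPR).2; linarith) hR0 (by linarith)
    rw [mC_comm al P R] at h
    obtain ⟨⟨h11, h12⟩, ⟨h21, h22⟩, ⟨h31, h32⟩, hd⟩ := h
    refine ⟨⟨by linarith, by linarith⟩, ⟨by linarith, by linarith⟩,
      ⟨by linarith, by linarith⟩, ?_⟩
    rcases hd with h | h | h | h | h | h
    · exact Or.inl (by linarith)
    · exact Or.inr (Or.inl (by linarith))
    · exact Or.inr (Or.inr (Or.inr (Or.inr (Or.inl (by linarith)))))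
    · exact Or.inr (Or.inr (Or.inr (Or.inr (Or.inr (by linarith)))))
    · exact Or.inr (Or.inr (Or.inl (by linarith)))
    · exact Or.inr (Or.inr (Or.inr (Or.inl (by linarith))))

lemma full (al be ga P R : ℝ) (hal : 0 < al) (hbe : 0 < be) (hga : 0 < ga)
    (hP : |P| ≤ al + be) (hR : |R| ≤ al + ga) (hPR : |P + R| ≤ be + ga) :
    (-al ≤ mA ga P R + mA be R P - mC al P R ∧ mA ga P R + mA be R P - mC al P R ≤ 0) ∧
    (-be ≤ mA ga P R - mA be R P + mC al P R ∧ mA ga P R - mA be R P + mC al P R ≤ 0) ∧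
    (0 ≤ mA ga P R - mA be R P - mC al P R ∧ mA ga P R - mA be R P - mC al P R ≤ ga) ∧
    (mA ga P R + mA be R P - mC al P R = 0 ∨ mA ga P R + mA be R P - mC al P R = -al ∨
     mA ga P R - mA be R P + mC al P R = 0 ∨ mA ga P R - mA be R P + mC al P R = -be ∨
     mA ga P R - mA be R P - mC al P R = 0 ∨ mA ga P R - mA be R P - mC al P R = ga) := by
  rcases le_total 0 (P + R) with hPR0 | hPR0
  · exact half al be ga P R hal hbe hga hP hR hPR hPR0
  · have h := half al be ga (-P) (-R) hal hbe hga (by rw [abs_neg]; exact hP)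
      (by rw [abs_neg]; exact hR)
      (by rw [show -P + -R = -(P+R) by ring, abs_neg]; exact hPR)
      (by linarith)
    rw [mA_neg ga P R, mA_neg be R P, mC_neg al P R] at h
    exact h

section Faces
variable {al be ga s1 s2 s3 : ℝ}

lemma face1 (hal : 0 < al) (hbe : 0 < be) (hga : 0 < ga)
    (h2 : -(be/2) ≤ s2) (h2' : s2 ≤ be/2) (h3 : -(ga/2) ≤ s3) (h3' : s3 ≤ ga/2)
    (heq : s1 = al/2) :
    |be/2 - s2| ≤ al + be ∧ |ga/2 + s3| ≤ al + ga ∧ |(be/2 - s2) + (ga/2 + s3)| ≤ be + ga ∧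
    mA ga (be/2 - s2) (ga/2 + s3) = (s1+s2)/2 - (al+be)/4 ∧
    mA be (ga/2 + s3) (be/2 - s2) = (s1-s3)/2 - (al+ga)/4 ∧
    mC al (be/2 - s2) (ga/2 + s3) = (s2-s3)/2 - (be+ga)/4 := by
  subst heq
  refine ⟨abs_le.2 ⟨by linarith, by linarith⟩, abs_le.2 ⟨by linarith, by linarith⟩,
    abs_le.2 ⟨by linarith, by linarith⟩, ?_, ?_, ?_⟩
  · unfold mA
    rw [abs_of_nonneg (show (0:ℝ) ≤ be/2 - s2 by linarith),
      abs_of_nonneg (show (0:ℝ) ≤ (be/2 - s2)/2 + (ga/2 + s3) by linarith),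
      min_eq_left (by linarith)]
    ring
  · unfold mA
    rw [abs_of_nonneg (show (0:ℝ) ≤ ga/2 + s3 by linarith),
      abs_of_nonneg (show (0:ℝ) ≤ (ga/2 + s3)/2 + (be/2 - s2) by linarith),
      min_eq_left (by linarith)]
    ring
  · unfold mC
    rw [abs_of_nonneg (show (0:ℝ) ≤ (be/2 - s2) + (ga/2 + s3) by linarith)]
    have habs : |(ga/2 + s3) - (be/2 - s2)| ≤ (be/2 - s2) + (ga/2 + s3) + 2*al :=
      abs_le.2 ⟨by linarith, by linarith⟩
    rw [min_eq_left (by linarith)]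
    ring

lemma face1' (hal : 0 < al) (hbe : 0 < be) (hga : 0 < ga)
    (h2 : -(be/2) ≤ s2) (h2' : s2 ≤ be/2) (h3 : -(ga/2) ≤ s3) (h3' : s3 ≤ ga/2)
    (heq : s1 = -(al/2)) :
    |al + be/2 - s2| ≤ al + be ∧ |-al - ga/2 - s3| ≤ al + ga ∧
    |(al + be/2 - s2) + (-al - ga/2 - s3)| ≤ be + ga ∧
    mA ga (al + be/2 - s2) (-al - ga/2 - s3) = (s1+s2)/2 - (al+be)/4 ∧
    mA be (-al - ga/2 - s3) (al + be/2 - s2) = (s1-s3)/2 - (al+ga)/4 ∧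
    mC al (al + be/2 - s2) (-al - ga/2 - s3) = (s2-s3)/2 - (be+ga)/4 := by
  subst heq
  refine ⟨abs_le.2 ⟨by linarith, by linarith⟩, abs_le.2 ⟨by linarith, by linarith⟩,
    abs_le.2 ⟨by linarith, by linarith⟩, ?_, ?_, ?_⟩
  · unfold mA
    rw [abs_of_nonneg (show (0:ℝ) ≤ al + be/2 - s2 by linarith)]
    have habs : |(al + be/2 - s2)/2 + (-al - ga/2 - s3)| ≤ ga + (al + be/2 - s2)/2 :=
      abs_le.2 ⟨by linarith, by linarith⟩
    rw [min_eq_left (by linarith)]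
    ring
  · unfold mA
    rw [abs_of_nonpos (show -al - ga/2 - s3 ≤ (0:ℝ) by linarith)]
    have habs : |(-al - ga/2 - s3)/2 + (al + be/2 - s2)| ≤ be - (-al - ga/2 - s3)/2 :=
      abs_le.2 ⟨by linarith, by linarith⟩
    rw [min_eq_left (by linarith)]
    ring
  · unfold mC
    rw [abs_of_nonpos (show (-al - ga/2 - s3) - (al + be/2 - s2) ≤ (0:ℝ) by linarith)]
    have habs : |(al + be/2 - s2) + (-al - ga/2 - s3)| ≤
        (al + be/2 - s2) - (-al - ga/2 - s3) - 2*al :=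
      abs_le.2 ⟨by linarith, by linarith⟩
    rw [min_eq_right (by linarith)]
    ring

lemma face2 (hal : 0 < al) (hbe : 0 < be) (hga : 0 < ga)
    (h1 : -(al/2) ≤ s1) (h1' : s1 ≤ al/2) (h3 : -(ga/2) ≤ s3) (h3' : s3 ≤ ga/2)
    (heq : s2 = be/2) :
    |s1 - al/2| ≤ al + be ∧ |s3 + ga/2 + al/2 - s1| ≤ al + ga ∧
    |(s1 - al/2) + (s3 + ga/2 + al/2 - s1)| ≤ be + ga ∧
    mA ga (s1 - al/2) (s3 + ga/2 + al/2 - s1) = (s1+s2)/2 - (al+be)/4 ∧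
    mA be (s3 + ga/2 + al/2 - s1) (s1 - al/2) = (s1-s3)/2 - (al+ga)/4 ∧
    mC al (s1 - al/2) (s3 + ga/2 + al/2 - s1) = (s2-s3)/2 - (be+ga)/4 := by
  subst heq
  refine ⟨abs_le.2 ⟨by linarith, by linarith⟩, abs_le.2 ⟨by linarith, by linarith⟩,
    abs_le.2 ⟨by linarith, by linarith⟩, ?_, ?_, ?_⟩
  · unfold mA
    rw [abs_of_nonpos (show s1 - al/2 ≤ (0:ℝ) by linarith)]
    have habs : |(s1 - al/2)/2 + (s3 + ga/2 + al/2 - s1)| ≤ ga - (s1 - al/2)/2 :=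
      abs_le.2 ⟨by linarith, by linarith⟩
    rw [min_eq_left (by linarith)]
    ring
  · unfold mA
    rw [abs_of_nonneg (show (0:ℝ) ≤ s3 + ga/2 + al/2 - s1 by linarith)]
    have habs : |(s3 + ga/2 + al/2 - s1)/2 + (s1 - al/2)| ≤ be + (s3 + ga/2 + al/2 - s1)/2 :=
      abs_le.2 ⟨by linarith, by linarith⟩
    rw [min_eq_left (by linarith)]
    ring
  · unfold mC
    rw [abs_of_nonneg (show (0:ℝ) ≤ (s1 - al/2) + (s3 + ga/2 + al/2 - s1) by linarith)]
    have habs : |(s3 + ga/2 + al/2 - s1) - (s1 - al/2)| ≤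
        2*al + ((s1 - al/2) + (s3 + ga/2 + al/2 - s1)) :=
      abs_le.2 ⟨by linarith, by linarith⟩
    rw [min_eq_left (by linarith)]
    ring

lemma face2' (hal : 0 < al) (hbe : 0 < be) (hga : 0 < ga)
    (h1 : -(al/2) ≤ s1) (h1' : s1 ≤ al/2) (h3 : -(ga/2) ≤ s3) (h3' : s3 ≤ ga/2)
    (heq : s2 = -(be/2)) :
    |be + al/2 - s1| ≤ al + be ∧ |s1 + s3 + ga/2 - al/2| ≤ al + ga ∧
    |(be + al/2 - s1) + (s1 + s3 + ga/2 - al/2)| ≤ be + ga ∧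
    mA ga (be + al/2 - s1) (s1 + s3 + ga/2 - al/2) = (s1+s2)/2 - (al+be)/4 ∧
    mA be (s1 + s3 + ga/2 - al/2) (be + al/2 - s1) = (s1-s3)/2 - (al+ga)/4 ∧
    mC al (be + al/2 - s1) (s1 + s3 + ga/2 - al/2) = (s2-s3)/2 - (be+ga)/4 := by
  subst heq
  refine ⟨abs_le.2 ⟨by linarith, by linarith⟩, abs_le.2 ⟨by linarith, by linarith⟩,
    abs_le.2 ⟨by linarith, by linarith⟩, ?_, ?_, ?_⟩
  · unfold mA
    rw [abs_of_nonneg (show (0:ℝ) ≤ be + al/2 - s1 by linarith)]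
    have habs : |(be + al/2 - s1)/2 + (s1 + s3 + ga/2 - al/2)| ≤ ga + (be + al/2 - s1)/2 :=
      abs_le.2 ⟨by linarith, by linarith⟩
    rw [min_eq_left (by linarith)]
    ring
  · unfold mA
    rw [abs_of_nonneg (show (0:ℝ) ≤ (s1 + s3 + ga/2 - al/2)/2 + (be + al/2 - s1) by linarith)]
    have hcond : be - ((s1 + s3 + ga/2 - al/2)/2 + (be + al/2 - s1)) ≤
        -(|s1 + s3 + ga/2 - al/2|/2) := by
      rcases abs_cases (s1 + s3 + ga/2 - al/2) with ⟨h, h'⟩ | ⟨h, h'⟩ <;> rw [h] <;> linarith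
    rw [min_eq_right hcond]
    ring
  · unfold mC
    rw [abs_of_nonneg (show (0:ℝ) ≤ (be + al/2 - s1) + (s1 + s3 + ga/2 - al/2) by linarith)]
    have habs : |(s1 + s3 + ga/2 - al/2) - (be + al/2 - s1)| ≤
        2*al + ((be + al/2 - s1) + (s1 + s3 + ga/2 - al/2)) :=
      abs_le.2 ⟨by linarith, by linarith⟩
    rw [min_eq_left (by linarith)]
    ring

lemma face3 (hal : 0 < al) (hbe : 0 < be) (hga : 0 < ga)
    (h1 : -(al/2) ≤ s1) (h1' : s1 ≤ al/2) (h2 : -(be/2) ≤ s2) (h2' : s2 ≤ be/2)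
    (heq : s3 = ga/2) :
    |s1 - s2 + be/2 - al/2| ≤ al + be ∧ |ga + al/2 - s1| ≤ al + ga ∧
    |(s1 - s2 + be/2 - al/2) + (ga + al/2 - s1)| ≤ be + ga ∧
    mA ga (s1 - s2 + be/2 - al/2) (ga + al/2 - s1) = (s1+s2)/2 - (al+be)/4 ∧
    mA be (ga + al/2 - s1) (s1 - s2 + be/2 - al/2) = (s1-s3)/2 - (al+ga)/4 ∧
    mC al (s1 - s2 + be/2 - al/2) (ga + al/2 - s1) = (s2-s3)/2 - (be+ga)/4 := by
  subst heq
  refine ⟨abs_le.2 ⟨by linarith, by linarith⟩, abs_le.2 ⟨by linarith, by linarith⟩,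
    abs_le.2 ⟨by linarith, by linarith⟩, ?_, ?_, ?_⟩
  · unfold mA
    rw [abs_of_nonneg (show (0:ℝ) ≤ (s1 - s2 + be/2 - al/2)/2 + (ga + al/2 - s1) by linarith)]
    have hcond : ga - ((s1 - s2 + be/2 - al/2)/2 + (ga + al/2 - s1)) ≤
        -(|s1 - s2 + be/2 - al/2|/2) := by
      rcases abs_cases (s1 - s2 + be/2 - al/2) with ⟨h, h'⟩ | ⟨h, h'⟩ <;> rw [h] <;> linarith
    rw [min_eq_right hcond]
    ring
  · unfold mA
    rw [abs_of_nonneg (show (0:ℝ) ≤ ga + al/2 - s1 by linarith)]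
    have habs : |(ga + al/2 - s1)/2 + (s1 - s2 + be/2 - al/2)| ≤ be + (ga + al/2 - s1)/2 :=
      abs_le.2 ⟨by linarith, by linarith⟩
    rw [min_eq_left (by linarith)]
    ring
  · unfold mC
    rw [abs_of_nonneg (show (0:ℝ) ≤ (s1 - s2 + be/2 - al/2) + (ga + al/2 - s1) by linarith)]
    have habs : |(ga + al/2 - s1) - (s1 - s2 + be/2 - al/2)| ≤
        2*al + ((s1 - s2 + be/2 - al/2) + (ga + al/2 - s1)) :=
      abs_le.2 ⟨by linarith, by linarith⟩
    rw [min_eq_left (by linarith)]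
    ring

lemma face3' (hal : 0 < al) (hbe : 0 < be) (hga : 0 < ga)
    (h1 : -(al/2) ≤ s1) (h1' : s1 ≤ al/2) (h2 : -(be/2) ≤ s2) (h2' : s2 ≤ be/2)
    (heq : s3 = -(ga/2)) :
    |al/2 + be/2 - s1 - s2| ≤ al + be ∧ |s1 - al/2| ≤ al + ga ∧
    |(al/2 + be/2 - s1 - s2) + (s1 - al/2)| ≤ be + ga ∧
    mA ga (al/2 + be/2 - s1 - s2) (s1 - al/2) = (s1+s2)/2 - (al+be)/4 ∧
    mA be (s1 - al/2) (al/2 + be/2 - s1 - s2) = (s1-s3)/2 - (al+ga)/4 ∧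
    mC al (al/2 + be/2 - s1 - s2) (s1 - al/2) = (s2-s3)/2 - (be+ga)/4 := by
  subst heq
  refine ⟨abs_le.2 ⟨by linarith, by linarith⟩, abs_le.2 ⟨by linarith, by linarith⟩,
    abs_le.2 ⟨by linarith, by linarith⟩, ?_, ?_, ?_⟩
  · unfold mA
    rw [abs_of_nonneg (show (0:ℝ) ≤ al/2 + be/2 - s1 - s2 by linarith)]
    have habs : |(al/2 + be/2 - s1 - s2)/2 + (s1 - al/2)| ≤ ga + (al/2 + be/2 - s1 - s2)/2 :=
      abs_le.2 ⟨by linarith, by linarith⟩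
    rw [min_eq_left (by linarith)]
    ring
  · unfold mA
    rw [abs_of_nonpos (show s1 - al/2 ≤ (0:ℝ) by linarith)]
    have habs : |(s1 - al/2)/2 + (al/2 + be/2 - s1 - s2)| ≤ be - (s1 - al/2)/2 :=
      abs_le.2 ⟨by linarith, by linarith⟩
    rw [min_eq_left (by linarith)]
    ring
  · unfold mC
    rw [abs_of_nonneg (show (0:ℝ) ≤ (al/2 + be/2 - s1 - s2) + (s1 - al/2) by linarith)]
    have habs : |(s1 - al/2) - (al/2 + be/2 - s1 - s2)| ≤
        2*al + ((al/2 + be/2 - s1 - s2) + (s1 - al/2)) :=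
      abs_le.2 ⟨by linarith, by linarith⟩
    rw [min_eq_left (by linarith)]
    ring
end Faces


open Set

lemma frontier_par (a b c : ℝ) (ha : 0 < a) (hb : 0 < b) (hc : 0 < c) :
    frontier {T : ℝ × ℝ × ℝ | |T.1 + T.2.1 - T.2.2| ≤ a ∧ |T.1 - T.2.1 + T.2.2| ≤ b ∧
      |T.1 - T.2.1 - T.2.2| ≤ c} =
    {T : ℝ × ℝ × ℝ | (|T.1 + T.2.1 - T.2.2| ≤ a ∧ |T.1 - T.2.1 + T.2.2| ≤ b ∧
      |T.1 - T.2.1 - T.2.2| ≤ c) ∧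
      (|T.1 + T.2.1 - T.2.2| = a ∨ |T.1 - T.2.1 + T.2.2| = b ∨ |T.1 - T.2.1 - T.2.2| = c)} := by
  set K := {T : ℝ × ℝ × ℝ | |T.1 + T.2.1 - T.2.2| ≤ a ∧ |T.1 - T.2.1 + T.2.2| ≤ b ∧
      |T.1 - T.2.1 - T.2.2| ≤ c} with hK
  have hc1 : Continuous fun T : ℝ × ℝ × ℝ => |T.1 + T.2.1 - T.2.2| := by fun_prop
  have hc2 : Continuous fun T : ℝ × ℝ × ℝ => |T.1 - T.2.1 + T.2.2| := by fun_prop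
  have hc3 : Continuous fun T : ℝ × ℝ × ℝ => |T.1 - T.2.1 - T.2.2| := by fun_prop
  have hKcl : IsClosed K := by
    rw [hK]
    exact ((isClosed_le hc1 continuous_const).inter
      ((isClosed_le hc2 continuous_const).inter (isClosed_le hc3 continuous_const)))
  set U := {T : ℝ × ℝ × ℝ | |T.1 + T.2.1 - T.2.2| < a ∧ |T.1 - T.2.1 + T.2.2| < b ∧
      |T.1 - T.2.1 - T.2.2| < c} with hU
  have hUopen : IsOpen U := by
    rw [hU]
    exact ((isOpen_lt hc1 continuous_const).inter
      ((isOpen_lt hc2 continuous_const).inter (isOpen_lt hc3 continuous_const)))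
  have hUK : U ⊆ K := fun T hT => ⟨hT.1.le, hT.2.1.le, hT.2.2.le⟩
  have hIntU : interior K = U := by
    apply Subset.antisymm
    · intro T hT
      obtain ⟨ε, hε, hball⟩ := Metric.isOpen_iff.1 isOpen_interior T hT
      have hKmem : ∀ δ₁ δ₂ δ₃ : ℝ, |δ₁| < ε → |δ₂| < ε → |δ₃| < ε →
          (T.1 + δ₁, T.2.1 + δ₂, T.2.2 + δ₃) ∈ K := by
        intro δ₁ δ₂ δ₃ h1 h2 h3
        apply interior_subset
        apply hball
        simp only [Metric.mem_ball, Prod.dist_eq, Real.dist_eq]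
        rw [show T.1 + δ₁ - T.1 = δ₁ by ring, show T.2.1 + δ₂ - T.2.1 = δ₂ by ring,
          show T.2.2 + δ₃ - T.2.2 = δ₃ by ring]
        exact max_lt h1 (max_lt h2 h3)
      have hεq : |ε/4| < ε := by rw [abs_of_nonneg (by linarith)]; linarith
      have hεq' : |(-(ε/4) : ℝ)| < ε := by rw [abs_neg]; exact hεq
      have h0 : |(0:ℝ)| < ε := by simpa using hε
      have hA1 := hKmem (ε/4) (ε/4) 0 hεq hεq h0
      have hA2 := hKmem (-(ε/4)) (-(ε/4)) 0 hεq' hεq' h0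
      have hB1 := hKmem (ε/4) 0 (ε/4) hεq h0 hεq
      have hB2 := hKmem (-(ε/4)) 0 (-(ε/4)) hεq' h0 hεq'
      have hC1 := hKmem 0 (-(ε/4)) (-(ε/4)) h0 hεq' hεq'
      have hC2 := hKmem 0 (ε/4) (ε/4) h0 hεq hεq
      simp only [hK, mem_setOf_eq] at hA1 hA2 hB1 hB2 hC1 hC2
      obtain ⟨hA1', -, -⟩ := hA1
      obtain ⟨hA2', -, -⟩ := hA2
      obtain ⟨-, hB1', -⟩ := hB1
      obtain ⟨-, hB2', -⟩ := hB2
      obtain ⟨-, -, hC1'⟩ := hC1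
      obtain ⟨-, -, hC2'⟩ := hC2
      rw [abs_le] at hA1' hA2' hB1' hB2' hC1' hC2'
      refine ⟨abs_lt.2 ⟨?_, ?_⟩, abs_lt.2 ⟨?_, ?_⟩, abs_lt.2 ⟨?_, ?_⟩⟩
      · have := hA2'.1; nlinarith [this]
      · have := hA1'.2; nlinarith [this]
      · have := hB2'.1; nlinarith [this]
      · have := hB1'.2; nlinarith [this]
      · have := hC1'.1; nlinarith [this]
      · have := hC2'.2; nlinarith [this]
    · exact hUopen.subset_interior_iff.2 hUK
  rw [hKcl.frontier_eq, hIntU]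
  ext T
  simp only [hK, hU, mem_diff, mem_setOf_eq, not_and, not_lt]
  constructor
  · rintro ⟨⟨p1, p2, p3⟩, hns⟩
    refine ⟨⟨p1, p2, p3⟩, ?_⟩
    rcases eq_or_lt_of_le p1 with h | h
    · exact Or.inl h
    rcases eq_or_lt_of_le p2 with h' | h'
    · exact Or.inr (Or.inl h')
    exact Or.inr (Or.inr (le_antisymm p3 (hns h h')))
  · rintro ⟨⟨p1, p2, p3⟩, hd⟩
    refine ⟨⟨p1, p2, p3⟩, ?_⟩
    intro h1 h2
    rcases hd with h | h | h
    · exact absurd h (ne_of_lt h1)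
    · exact absurd h (ne_of_lt h2)
    · exact le_of_eq h.symm

noncomputable def Vtx (x y z : ℝ) : ℝ × ℝ × ℝ := ((x+y)/2, (x-z)/2, (y-z)/2)

def Ebox (a b c : ℝ) : Set (ℝ × ℝ × ℝ) :=
  {Vtx a b (-c), Vtx (-a) (-b) (-c), Vtx (-a) b c, Vtx a (-b) c,
   Vtx (-a) (-b) c, Vtx a b c, Vtx a (-b) (-c), Vtx (-a) b (-c)}

lemma comb_abs_le (p q α β r : ℝ) (hp : 0 ≤ p) (hq : 0 ≤ q) (hpq : p + q = 1)
    (hα : |α| ≤ r) (hβ : |β| ≤ r) : |p*α + q*β| ≤ r := by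
  obtain ⟨h1, h2⟩ := abs_le.1 hα
  obtain ⟨h3, h4⟩ := abs_le.1 hβ
  exact abs_le.2 ⟨by nlinarith, by nlinarith⟩

lemma extreme_scalar (p q α β r : ℝ) (hp : 0 < p) (hq : 0 < q) (hpq : p + q = 1)
    (hα : α ≤ r) (hβ : β ≤ r) (heq : p*α + q*β = r) : α = r ∧ β = r := by
  have hpr : p * r + q * r = r := by rw [← add_mul, hpq, one_mul]
  constructor
  · by_contra hne
    have h1 : α < r := lt_of_le_of_ne hα hne
    nlinarith [mul_pos hp (sub_pos.2 h1), mul_nonneg hq.le (sub_nonneg.2 hβ), hpr]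
  · by_contra hne
    have h1 : β < r := lt_of_le_of_ne hβ hne
    nlinarith [mul_pos hq (sub_pos.2 h1), mul_nonneg hp.le (sub_nonneg.2 hα), hpr]

lemma extreme_scalar' (p q α β r x : ℝ) (hp : 0 < p) (hq : 0 < q) (hpq : p + q = 1)
    (hα : |α| ≤ r) (hβ : |β| ≤ r) (hx : |x| = r) (heq : p*α + q*β = x) :
    α = x ∧ β = x := by
  have hr : 0 ≤ r := by rw [← hx]; exact abs_nonneg x
  rcases (abs_eq hr).1 hx with h | h
  · rw [h] at heq ⊢
    exact extreme_scalar p q α β r hp hq hpq (abs_le.1 hα).2 (abs_le.1 hβ).2 heq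
  · rw [h] at heq ⊢
    have h2 := extreme_scalar p q (-α) (-β) r hp hq hpq
      (by linarith [(abs_le.1 hα).1]) (by linarith [(abs_le.1 hβ).1]) (by linarith)
    exact ⟨by linarith [h2.1], by linarith [h2.2]⟩

set_option maxHeartbeats 1000000 in
lemma part1 (a b c : ℝ) (ha : 0 < a) (hb : 0 < b) (hc : 0 < c) :
    {T : ℝ × ℝ × ℝ | |T.1 + T.2.1 - T.2.2| ≤ a ∧ |T.1 - T.2.1 + T.2.2| ≤ b ∧
      |T.1 - T.2.1 - T.2.2| ≤ c} = convexHull ℝ (Ebox a b c) ∧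
    extremePoints ℝ {T : ℝ × ℝ × ℝ | |T.1 + T.2.1 - T.2.2| ≤ a ∧ |T.1 - T.2.1 + T.2.2| ≤ b ∧
      |T.1 - T.2.1 - T.2.2| ≤ c} = Ebox a b c := by
  set K := {T : ℝ × ℝ × ℝ | |T.1 + T.2.1 - T.2.2| ≤ a ∧ |T.1 - T.2.1 + T.2.2| ≤ b ∧
      |T.1 - T.2.1 - T.2.2| ≤ c} with hK
  have vtx_mem : ∀ x y z : ℝ, |x| ≤ a → |y| ≤ b → |z| ≤ c → Vtx x y z ∈ K := by
    intro x y z hx hy hz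
    simp only [hK, Vtx, mem_setOf_eq]
    rw [show (x+y)/2 + (x-z)/2 - (y-z)/2 = x by ring,
      show (x+y)/2 - (x-z)/2 + (y-z)/2 = y by ring,
      show (x+y)/2 - (x-z)/2 - (y-z)/2 = z by ring]
    exact ⟨hx, hy, hz⟩
  have hEK : Ebox a b c ⊆ K := by
    intro y hy
    have haa : |a| ≤ a := by rw [abs_of_pos ha]
    have haa' : |(-a)| ≤ a := by rw [abs_neg, abs_of_pos ha]
    have hbb : |b| ≤ b := by rw [abs_of_pos hb]
    have hbb' : |(-b)| ≤ b := by rw [abs_neg, abs_of_pos hb]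
    have hcc : |c| ≤ c := by rw [abs_of_pos hc]
    have hcc' : |(-c)| ≤ c := by rw [abs_neg, abs_of_pos hc]
    rcases hy with rfl | rfl | rfl | rfl | rfl | rfl | rfl | rfl <;>
      solve_by_elim [vtx_mem]
  have hconvK : Convex ℝ K := by
    intro T hT S hS p q hp hq hpq
    simp only [hK, mem_setOf_eq, Prod.fst_add, Prod.snd_add, Prod.smul_fst, Prod.smul_snd,
      smul_eq_mul] at *
    refine ⟨?_, ?_, ?_⟩
    · rw [show p * T.1 + q * S.1 + (p * T.2.1 + q * S.2.1) - (p * T.2.2 + q * S.2.2)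
        = p * (T.1 + T.2.1 - T.2.2) + q * (S.1 + S.2.1 - S.2.2) by ring]
      exact comb_abs_le p q _ _ a hp hq hpq hT.1 hS.1
    · rw [show p * T.1 + q * S.1 - (p * T.2.1 + q * S.2.1) + (p * T.2.2 + q * S.2.2)
        = p * (T.1 - T.2.1 + T.2.2) + q * (S.1 - S.2.1 + S.2.2) by ring]
      exact comb_abs_le p q _ _ b hp hq hpq hT.2.1 hS.2.1
    · rw [show p * T.1 + q * S.1 - (p * T.2.1 + q * S.2.1) - (p * T.2.2 + q * S.2.2)
        = p * (T.1 - T.2.1 - T.2.2) + q * (S.1 - S.2.1 - S.2.2) by ring]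
      exact comb_abs_le p q _ _ c hp hq hpq hT.2.2 hS.2.2
  have hconvH : Convex ℝ (convexHull ℝ (Ebox a b c)) := convex_convexHull ℝ _
  have h8 : ∀ y ∈ Ebox a b c, y ∈ convexHull ℝ (Ebox a b c) := fun y hy =>
    subset_convexHull ℝ _ hy
  -- generic convex-combination identities for Vtx
  have hcomb1 : ∀ y z s1 : ℝ, |s1| ≤ a →
      Vtx s1 y z = ((a+s1)/(2*a)) • Vtx a y z + ((a-s1)/(2*a)) • Vtx (-a) y z := by
    intro y z s1 _
    unfold Vtx
    have h2a : (2*a) ≠ 0 := by positivity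
    refine Prod.ext ?_ (Prod.ext ?_ ?_) <;>
      simp only [Prod.fst_add, Prod.snd_add, Prod.smul_fst, Prod.smul_snd, smul_eq_mul] <;>
      field_simp <;> ring
  have hcomb2 : ∀ x z s2 : ℝ, |s2| ≤ b →
      Vtx x s2 z = ((b+s2)/(2*b)) • Vtx x b z + ((b-s2)/(2*b)) • Vtx x (-b) z := by
    intro x z s2 _
    unfold Vtx
    have h2b : (2*b) ≠ 0 := by positivity
    refine Prod.ext ?_ (Prod.ext ?_ ?_) <;>
      simp only [Prod.fst_add, Prod.snd_add, Prod.smul_fst, Prod.smul_snd, smul_eq_mul] <;>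
      field_simp <;> ring
  have hcomb3 : ∀ x y s3 : ℝ, |s3| ≤ c →
      Vtx x y s3 = ((c+s3)/(2*c)) • Vtx x y c + ((c-s3)/(2*c)) • Vtx x y (-c) := by
    intro x y s3 _
    unfold Vtx
    have h2c : (2*c) ≠ 0 := by positivity
    refine Prod.ext ?_ (Prod.ext ?_ ?_) <;>
      simp only [Prod.fst_add, Prod.snd_add, Prod.smul_fst, Prod.smul_snd, smul_eq_mul] <;>
      field_simp <;> ring
  have wt : ∀ (r s : ℝ), 0 < r → |s| ≤ r →
      0 ≤ (r+s)/(2*r) ∧ 0 ≤ (r-s)/(2*r) ∧ (r+s)/(2*r) + (r-s)/(2*r) = 1 := by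
    intro r s hr hs
    obtain ⟨h1, h2⟩ := abs_le.1 hs
    refine ⟨div_nonneg (by linarith) (by linarith), div_nonneg (by linarith) (by linarith), ?_⟩
    field_simp
    ring
  have hstage1 : ∀ y z : ℝ, (y = b ∨ y = -b) → (z = c ∨ z = -c) →
      ∀ s1 : ℝ, |s1| ≤ a → Vtx s1 y z ∈ convexHull ℝ (Ebox a b c) := by
    rintro y z hy hz s1 hs1
    obtain ⟨w1, w2, w3⟩ := wt a s1 ha hs1
    rw [hcomb1 y z s1 hs1]
    have hm1 : Vtx a y z ∈ Ebox a b c := by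
      rcases hy with rfl | rfl <;> rcases hz with rfl | rfl <;> simp [Ebox]
    have hm2 : Vtx (-a) y z ∈ Ebox a b c := by
      rcases hy with rfl | rfl <;> rcases hz with rfl | rfl <;> simp [Ebox]
    exact hconvH (h8 _ hm1) (h8 _ hm2) w1 w2 w3
  have hstage2 : ∀ z : ℝ, (z = c ∨ z = -c) → ∀ s1 s2 : ℝ, |s1| ≤ a → |s2| ≤ b →
      Vtx s1 s2 z ∈ convexHull ℝ (Ebox a b c) := by
    rintro z hz s1 s2 hs1 hs2
    obtain ⟨w1, w2, w3⟩ := wt b s2 hb hs2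
    rw [hcomb2 s1 z s2 hs2]
    exact hconvH (hstage1 b z (Or.inl rfl) hz s1 hs1) (hstage1 (-b) z (Or.inr rfl) hz s1 hs1)
      w1 w2 w3
  have hkey : ∀ s1 s2 s3 : ℝ, |s1| ≤ a → |s2| ≤ b → |s3| ≤ c →
      Vtx s1 s2 s3 ∈ convexHull ℝ (Ebox a b c) := by
    intro s1 s2 s3 hs1 hs2 hs3
    obtain ⟨w1, w2, w3⟩ := wt c s3 hc hs3
    rw [hcomb3 s1 s2 s3 hs3]
    exact hconvH (hstage2 c (Or.inl rfl) s1 s2 hs1 hs2) (hstage2 (-c) (Or.inr rfl) s1 s2 hs1 hs2)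
      w1 w2 w3
  have hhull : K = convexHull ℝ (Ebox a b c) := by
    apply Subset.antisymm
    · intro T hT
      obtain ⟨h1, h2, h3⟩ := hT
      have hTeq : T = Vtx (T.1 + T.2.1 - T.2.2) (T.1 - T.2.1 + T.2.2) (T.1 - T.2.1 - T.2.2) := by
        unfold Vtx
        refine Prod.ext ?_ (Prod.ext ?_ ?_) <;> simp <;> ring
      rw [hTeq]
      exact hkey _ _ _ h1 h2 h3
    · exact convexHull_min hEK hconvK
  refine ⟨hhull, ?_⟩
  -- extreme points
  have vertex_ext : ∀ x y z : ℝ, |x| = a → |y| = b → |z| = c →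
      Vtx x y z ∈ extremePoints ℝ K := by
    intro x y z hx hy hz
    refine ⟨vtx_mem x y z (le_of_eq hx) (le_of_eq hy) (le_of_eq hz), ?_⟩
    intro T₁ hT₁ T₂ hT₂ hseg
    obtain ⟨p, q, hp, hq, hpq, heq⟩ := hseg
    have h1 : p * T₁.1 + q * T₂.1 = (x+y)/2 := by
      have := congrArg Prod.fst heq
      simpa [Vtx, Prod.fst_add, Prod.smul_fst, smul_eq_mul] using this
    have h2 : p * T₁.2.1 + q * T₂.2.1 = (x-z)/2 := by
      have := congrArg (fun T => T.2.1) heq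
      simpa [Vtx, Prod.fst_add, Prod.snd_add, Prod.smul_fst, Prod.smul_snd, smul_eq_mul]
        using this
    have h3 : p * T₁.2.2 + q * T₂.2.2 = (y-z)/2 := by
      have := congrArg (fun T => T.2.2) heq
      simpa [Vtx, Prod.snd_add, Prod.smul_snd, smul_eq_mul] using this
    have e1 : p * (T₁.1 + T₁.2.1 - T₁.2.2) + q * (T₂.1 + T₂.2.1 - T₂.2.2) = x := by
      linear_combination h1 + h2 - h3
    have e2 : p * (T₁.1 - T₁.2.1 + T₁.2.2) + q * (T₂.1 - T₂.2.1 + T₂.2.2) = y := by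
      linear_combination h1 - h2 + h3
    have e3 : p * (T₁.1 - T₁.2.1 - T₁.2.2) + q * (T₂.1 - T₂.2.1 - T₂.2.2) = z := by
      linear_combination h1 - h2 - h3
    obtain ⟨f1, g1⟩ := extreme_scalar' p q _ _ a x hp hq hpq hT₁.1 hT₂.1 hx e1
    obtain ⟨f2, g2⟩ := extreme_scalar' p q _ _ b y hp hq hpq hT₁.2.1 hT₂.2.1 hy e2
    obtain ⟨f3, g3⟩ := extreme_scalar' p q _ _ c z hp hq hpq hT₁.2.2 hT₂.2.2 hz e3
    · refine Prod.ext ?_ (Prod.ext ?_ ?_) <;> simp only [Vtx] <;> linarith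
  apply Subset.antisymm
  · rw [hhull]
    exact extremePoints_convexHull_subset
  · intro y hy
    have haa : |a| = a := abs_of_pos ha
    have haa' : |(-a)| = a := by rw [abs_neg, abs_of_pos ha]
    have hbb : |b| = b := abs_of_pos hb
    have hbb' : |(-b)| = b := by rw [abs_neg, abs_of_pos hb]
    have hcc : |c| = c := abs_of_pos hc
    have hcc' : |(-c)| = c := by rw [abs_neg, abs_of_pos hc]
    rcases hy with rfl | rfl | rfl | rfl | rfl | rfl | rfl | rfl <;>
      solve_by_elim [vertex_ext]

lemma solve_x (u v : ℝ × ℝ) (P R : ℝ)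
    (hD : ip u u * ip v v - ip u v * ip u v ≠ 0) :
    ∃ x : ℝ × ℝ, ip x u = P/2 ∧ ip x v = R/2 := by
  refine ⟨((ip v v * (P/2) - ip u v * (R/2))/(ip u u * ip v v - ip u v * ip u v)) • u +
          ((ip u u * (R/2) - ip u v * (P/2))/(ip u u * ip v v - ip u v * ip u v)) • v, ?_, ?_⟩ <;>
  · simp only [ip, Prod.fst_add, Prod.snd_add, Prod.smul_fst, Prod.smul_snd, smul_eq_mul] at hD ⊢
    generalize hd : (u.1 * u.1 + u.2 * u.2) * (v.1 * v.1 + v.2 * v.2) - (u.1 * v.1 + u.2 * v.2) * (u.1 * v.1 + u.2 * v.2) = d at hD ⊢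
    field_simp
    rw [← hd]
    ring

lemma build_point (u v w : ℝ × ℝ) (hw : w = -u - v)
    (huv : ip u v < 0) (huw : ip u w < 0) (hvw : ip v w < 0) (P R : ℝ)
    (hmP : |P| ≤ ip u u) (hmR : |R| ≤ ip v v) (hmPR : |P + R| ≤ ip w w) :
    ∃ x : ℝ × ℝ, phiMap u v x = (ip u u/4 + mA (ip v v + ip u v) P R,
      ip v v/4 + mA (ip u u + ip u v) R P, ip w w/4 + mC (-(ip u v)) P R) := by
  have hwu : ip u w = -(ip u u) - ip u v := by
    rw [hw]; simp [ip, Prod.fst_sub, Prod.snd_sub, Prod.fst_neg, Prod.snd_neg]; ring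
  have hwv : ip v w = -(ip u v) - ip v v := by
    rw [hw]; simp [ip, Prod.fst_sub, Prod.snd_sub, Prod.fst_neg, Prod.snd_neg]; ring
  have hww : ip w w = ip u u + 2*ip u v + ip v v := by
    rw [hw]; simp [ip, Prod.fst_sub, Prod.snd_sub, Prod.fst_neg, Prod.snd_neg]; ring
  have hal : (0:ℝ) < -(ip u v) := by linarith
  have hbe : (0:ℝ) < ip u u + ip u v := by linarith
  have hga : (0:ℝ) < ip v v + ip u v := by linarith
  have hDpos : 0 < ip u u * ip v v - ip u v * ip u v := by
    nlinarith [mul_pos hbe hga, mul_pos hal (show (0:ℝ) < ip w w by linarith [hww, hbe, hga]),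
      hww]
  obtain ⟨x, hxu, hxv⟩ := solve_x u v P R (ne_of_gt hDpos)
  have hxw : ip x w = -(ip x u) - ip x v := by
    rw [hw]; simp [ip, Prod.fst_sub, Prod.snd_sub, Prod.fst_neg, Prod.snd_neg]; ring
  have h2u : 2 * ip x u = P := by rw [hxu]; ring
  have h2v : 2 * ip x v = R := by rw [hxv]; ring
  have h2w : 2 * ip x w = -(P + R) := by rw [hxw]; rw [hxu, hxv] at *; ring
  have hv1 : |2 * ip x u| ≤ ip u u := by rw [h2u]; exact hmP
  have hv2 : |2 * ip x v| ≤ ip v v := by rw [h2v]; exact hmR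
  have hv3 : |2 * ip x w| ≤ ip w w := by rw [h2w, abs_neg]; exact hmPR
  refine ⟨x, ?_⟩
  rw [phi_formula u v w x hw huv huw hvw hv1 hv2 hv3, h2u, h2v]

end TropKum

open TropKum in
set_option maxHeartbeats 4000000 in
theorem tropical_kummer_quartic_is_parallelepiped_boundary
    (u v w : ℝ × ℝ) (hw : w = -u - v)
    (huv : ip u v < 0) (huw : ip u w < 0) (hvw : ip v w < 0)
    (θ₁₀ θ₀₁ θ₁₁ : ℝ)
    (h10 : θ₁₀ = ip u u / 4) (h01 : θ₀₁ = ip v v / 4) (h11 : θ₁₁ = ip w w / 4)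
    (τ₀ τ₁ τ₂ τ₃ : ℝ × ℝ × ℝ)
    (hτ₀ : τ₀ = (θ₁₀, θ₀₁, θ₁₁))
    (hτ₁ : τ₁ = (-θ₁₀, θ₁₁ - θ₁₀, θ₀₁ - θ₁₀))
    (hτ₂ : τ₂ = (θ₁₁ - θ₀₁, -θ₀₁, θ₁₀ - θ₀₁))
    (hτ₃ : τ₃ = (θ₀₁ - θ₁₁, θ₁₀ - θ₁₁, -θ₁₁))
    (Ppar : Set (ℝ × ℝ × ℝ))
    (hPpar : Ppar = {T : ℝ × ℝ × ℝ |
        |T.1 + T.2.1 - T.2.2| ≤ θ₁₀ + θ₀₁ - θ₁₁ ∧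
        |T.1 - T.2.1 + T.2.2| ≤ θ₁₀ - θ₀₁ + θ₁₁ ∧
        |T.1 - T.2.1 - T.2.2| ≤ -θ₁₀ + θ₀₁ + θ₁₁}) :
    (Ppar = convexHull ℝ ({τ₀, τ₁, τ₂, τ₃, -τ₀, -τ₁, -τ₂, -τ₃} : Set (ℝ × ℝ × ℝ)) ∧
      Set.extremePoints ℝ Ppar = ({τ₀, τ₁, τ₂, τ₃, -τ₀, -τ₁, -τ₂, -τ₃} : Set (ℝ × ℝ × ℝ))) ∧
    Set.range (phiMap u v) = frontier Ppar := by
  have hwu : ip u w = -(ip u u) - ip u v := by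
    rw [hw]; simp [ip, Prod.fst_sub, Prod.snd_sub, Prod.fst_neg, Prod.snd_neg]; ring
  have hwv : ip v w = -(ip u v) - ip v v := by
    rw [hw]; simp [ip, Prod.fst_sub, Prod.snd_sub, Prod.fst_neg, Prod.snd_neg]; ring
  have hww : ip w w = ip u u + 2*ip u v + ip v v := by
    rw [hw]; simp [ip, Prod.fst_sub, Prod.snd_sub, Prod.fst_neg, Prod.snd_neg]; ring
  have hal : (0:ℝ) < -(ip u v) := by linarith
  have hbe : (0:ℝ) < ip u u + ip u v := by linarith
  have hga : (0:ℝ) < ip v v + ip u v := by linarith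
  have hapos : 0 < θ₁₀ + θ₀₁ - θ₁₁ := by rw [h10, h01, h11]; linarith [hww]
  have hbpos : 0 < θ₁₀ - θ₀₁ + θ₁₁ := by rw [h10, h01, h11]; linarith [hww]
  have hcpos : 0 < -θ₁₀ + θ₀₁ + θ₁₁ := by rw [h10, h01, h11]; linarith [hww]
  have haeq : θ₁₀ + θ₀₁ - θ₁₁ = -(ip u v)/2 := by rw [h10, h01, h11]; linarith [hww]
  have hbeq : θ₁₀ - θ₀₁ + θ₁₁ = (ip u u + ip u v)/2 := by rw [h10, h01, h11]; linarith [hww]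
  have hceq : -θ₁₀ + θ₀₁ + θ₁₁ = (ip v v + ip u v)/2 := by rw [h10, h01, h11]; linarith [hww]
  constructor
  · -- Part 1 : convex hull and extreme points
    obtain ⟨hh, he⟩ := part1 (θ₁₀ + θ₀₁ - θ₁₁) (θ₁₀ - θ₀₁ + θ₁₁) (-θ₁₀ + θ₀₁ + θ₁₁)
      hapos hbpos hcpos
    have f0 : -τ₀ = Vtx (-(θ₁₀ + θ₀₁ - θ₁₁)) (-(θ₁₀ - θ₀₁ + θ₁₁)) (-θ₁₀ + θ₀₁ + θ₁₁) := by
      rw [hτ₀]; unfold Vtx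
      refine Prod.ext ?_ (Prod.ext ?_ ?_) <;>
        simp only [Prod.fst_neg, Prod.snd_neg] <;> ring
    have f1 : -τ₁ = Vtx (θ₁₀ + θ₀₁ - θ₁₁) (θ₁₀ - θ₀₁ + θ₁₁) (-θ₁₀ + θ₀₁ + θ₁₁) := by
      rw [hτ₁]; unfold Vtx
      refine Prod.ext ?_ (Prod.ext ?_ ?_) <;>
        simp only [Prod.fst_neg, Prod.snd_neg] <;> ring
    have f2 : -τ₂ = Vtx (θ₁₀ + θ₀₁ - θ₁₁) (-(θ₁₀ - θ₀₁ + θ₁₁)) (-(-θ₁₀ + θ₀₁ + θ₁₁)) := by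
      rw [hτ₂]; unfold Vtx
      refine Prod.ext ?_ (Prod.ext ?_ ?_) <;>
        simp only [Prod.fst_neg, Prod.snd_neg] <;> ring
    have f3 : -τ₃ = Vtx (-(θ₁₀ + θ₀₁ - θ₁₁)) (θ₁₀ - θ₀₁ + θ₁₁) (-(-θ₁₀ + θ₀₁ + θ₁₁)) := by
      rw [hτ₃]; unfold Vtx
      refine Prod.ext ?_ (Prod.ext ?_ ?_) <;>
        simp only [Prod.fst_neg, Prod.snd_neg] <;> ring
    have e0 : τ₀ = Vtx (θ₁₀ + θ₀₁ - θ₁₁) (θ₁₀ - θ₀₁ + θ₁₁) (-(-θ₁₀ + θ₀₁ + θ₁₁)) := by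
      rw [hτ₀]; unfold Vtx
      refine Prod.ext ?_ (Prod.ext ?_ ?_) <;> ring
    have e1 : τ₁ = Vtx (-(θ₁₀ + θ₀₁ - θ₁₁)) (-(θ₁₀ - θ₀₁ + θ₁₁)) (-(-θ₁₀ + θ₀₁ + θ₁₁)) := by
      rw [hτ₁]; unfold Vtx
      refine Prod.ext ?_ (Prod.ext ?_ ?_) <;> ring
    have e2 : τ₂ = Vtx (-(θ₁₀ + θ₀₁ - θ₁₁)) (θ₁₀ - θ₀₁ + θ₁₁) (-θ₁₀ + θ₀₁ + θ₁₁) := by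
      rw [hτ₂]; unfold Vtx
      refine Prod.ext ?_ (Prod.ext ?_ ?_) <;> ring
    have e3 : τ₃ = Vtx (θ₁₀ + θ₀₁ - θ₁₁) (-(θ₁₀ - θ₀₁ + θ₁₁)) (-θ₁₀ + θ₀₁ + θ₁₁) := by
      rw [hτ₃]; unfold Vtx
      refine Prod.ext ?_ (Prod.ext ?_ ?_) <;> ring
    have hE : ({τ₀, τ₁, τ₂, τ₃, -τ₀, -τ₁, -τ₂, -τ₃} : Set (ℝ × ℝ × ℝ))
        = Ebox (θ₁₀ + θ₀₁ - θ₁₁) (θ₁₀ - θ₀₁ + θ₁₁) (-θ₁₀ + θ₀₁ + θ₁₁) := by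
      rw [f0, f1, f2, f3, e0, e1, e2, e3]
      unfold Ebox
      rfl
    rw [hPpar, hE]
    exact ⟨hh, he⟩
  · -- Part 2 : the tropical Kummer surface is the boundary
    rw [hPpar, frontier_par _ _ _ hapos hbpos hcpos]
    ext T
    constructor
    · rintro ⟨x, rfl⟩
      obtain ⟨x₀, hphi, hv1, hv2, hv3⟩ := reduce u v w x hw huv huw hvw
      rw [hphi, phi_formula u v w x₀ hw huv huw hvw hv1 hv2 hv3]
      have hx₀w : ip x₀ w = -(ip x₀ u) - ip x₀ v := by
        rw [hw]; simp [ip, Prod.fst_sub, Prod.snd_sub, Prod.fst_neg, Prod.snd_neg]; ring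
      obtain ⟨⟨b11, b12⟩, ⟨b21, b22⟩, ⟨b31, b32⟩, hd⟩ :=
        full (-(ip u v)) (ip u u + ip u v) (ip v v + ip u v)
          (2 * ip x₀ u) (2 * ip x₀ v) hal hbe hga
          (by linarith [hv1]) (by linarith [hv2])
          (by
            rw [show 2 * ip x₀ u + 2 * ip x₀ v = -(2 * ip x₀ w) by linarith [hx₀w], abs_neg]
            linarith [hv3, hww])
      simp only [Set.mem_setOf_eq]
      refine ⟨⟨abs_le.2 ⟨by linarith [h10, h01, h11, hww], by linarith [h10, h01, h11, hww]⟩,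
        abs_le.2 ⟨by linarith [h10, h01, h11, hww], by linarith [h10, h01, h11, hww]⟩,
        abs_le.2 ⟨by linarith [h10, h01, h11, hww], by linarith [h10, h01, h11, hww]⟩⟩, ?_⟩
      rcases hd with h | h | h | h | h | h
      · refine Or.inl ?_
        rw [show ip u u / 4 + mA (ip v v + ip u v) (2 * ip x₀ u) (2 * ip x₀ v) +
            (ip v v / 4 + mA (ip u u + ip u v) (2 * ip x₀ v) (2 * ip x₀ u)) -
            (ip w w / 4 + mC (-(ip u v)) (2 * ip x₀ u) (2 * ip x₀ v))
            = θ₁₀ + θ₀₁ - θ₁₁ by linarith [h10, h01, h11, hww]]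
        exact abs_of_pos hapos
      · refine Or.inl ?_
        rw [show ip u u / 4 + mA (ip v v + ip u v) (2 * ip x₀ u) (2 * ip x₀ v) +
            (ip v v / 4 + mA (ip u u + ip u v) (2 * ip x₀ v) (2 * ip x₀ u)) -
            (ip w w / 4 + mC (-(ip u v)) (2 * ip x₀ u) (2 * ip x₀ v))
            = -(θ₁₀ + θ₀₁ - θ₁₁) by linarith [h10, h01, h11, hww], abs_neg]
        exact abs_of_pos hapos
      · refine Or.inr (Or.inl ?_)
        rw [show ip u u / 4 + mA (ip v v + ip u v) (2 * ip x₀ u) (2 * ip x₀ v) -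
            (ip v v / 4 + mA (ip u u + ip u v) (2 * ip x₀ v) (2 * ip x₀ u)) +
            (ip w w / 4 + mC (-(ip u v)) (2 * ip x₀ u) (2 * ip x₀ v))
            = θ₁₀ - θ₀₁ + θ₁₁ by linarith [h10, h01, h11, hww]]
        exact abs_of_pos hbpos
      · refine Or.inr (Or.inl ?_)
        rw [show ip u u / 4 + mA (ip v v + ip u v) (2 * ip x₀ u) (2 * ip x₀ v) -
            (ip v v / 4 + mA (ip u u + ip u v) (2 * ip x₀ v) (2 * ip x₀ u)) +
            (ip w w / 4 + mC (-(ip u v)) (2 * ip x₀ u) (2 * ip x₀ v))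
            = -(θ₁₀ - θ₀₁ + θ₁₁) by linarith [h10, h01, h11, hww], abs_neg]
        exact abs_of_pos hbpos
      · refine Or.inr (Or.inr ?_)
        rw [show ip u u / 4 + mA (ip v v + ip u v) (2 * ip x₀ u) (2 * ip x₀ v) -
            (ip v v / 4 + mA (ip u u + ip u v) (2 * ip x₀ v) (2 * ip x₀ u)) -
            (ip w w / 4 + mC (-(ip u v)) (2 * ip x₀ u) (2 * ip x₀ v))
            = -(-θ₁₀ + θ₀₁ + θ₁₁) by linarith [h10, h01, h11, hww], abs_neg]
        exact abs_of_pos hcpos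
      · refine Or.inr (Or.inr ?_)
        rw [show ip u u / 4 + mA (ip v v + ip u v) (2 * ip x₀ u) (2 * ip x₀ v) -
            (ip v v / 4 + mA (ip u u + ip u v) (2 * ip x₀ v) (2 * ip x₀ u)) -
            (ip w w / 4 + mC (-(ip u v)) (2 * ip x₀ u) (2 * ip x₀ v))
            = -θ₁₀ + θ₀₁ + θ₁₁ by linarith [h10, h01, h11, hww]]
        exact abs_of_pos hcpos
    · rintro ⟨⟨hb1, hb2, hb3⟩, hd⟩
      obtain ⟨ha1, ha2⟩ := abs_le.1 hb1
      obtain ⟨ha3, ha4⟩ := abs_le.1 hb2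
      obtain ⟨ha5, ha6⟩ := abs_le.1 hb3
      rcases hd with h | h | h
      · rcases (abs_eq hapos.le).1 h with h' | h'
        · obtain ⟨hm1, hm2, hm3, hv1', hv2', hv3'⟩ :=
            face1 (al := -(ip u v)) (be := ip u u + ip u v) (ga := ip v v + ip u v)
              (s1 := T.1 + T.2.1 - T.2.2) (s2 := T.1 - T.2.1 + T.2.2) (s3 := T.1 - T.2.1 - T.2.2)
              hal hbe hga (by linarith [hbeq]) (by linarith [hbeq])
              (by linarith [hceq]) (by linarith [hceq]) (by linarith [haeq])
          obtain ⟨x, hx⟩ := build_point u v w hw huv huw hvw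
            ((ip u u + ip u v)/2 - (T.1 - T.2.1 + T.2.2))
            ((ip v v + ip u v)/2 + (T.1 - T.2.1 - T.2.2))
            (by linarith [hm1]) (by linarith [hm2]) (by linarith [hm3, hww])
          refine ⟨x, ?_⟩
          rw [hx, hv1', hv2', hv3']
          refine Prod.ext ?_ (Prod.ext ?_ ?_) <;> dsimp only <;> linarith [h10, h01, h11, hww]
        · obtain ⟨hm1, hm2, hm3, hv1', hv2', hv3'⟩ :=
            face1' (al := -(ip u v)) (be := ip u u + ip u v) (ga := ip v v + ip u v)
              (s1 := T.1 + T.2.1 - T.2.2) (s2 := T.1 - T.2.1 + T.2.2) (s3 := T.1 - T.2.1 - T.2.2)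
              hal hbe hga (by linarith [hbeq]) (by linarith [hbeq])
              (by linarith [hceq]) (by linarith [hceq]) (by linarith [haeq])
          obtain ⟨x, hx⟩ := build_point u v w hw huv huw hvw
            (-(ip u v) + (ip u u + ip u v)/2 - (T.1 - T.2.1 + T.2.2))
            (-(-(ip u v)) - (ip v v + ip u v)/2 - (T.1 - T.2.1 - T.2.2))
            (by linarith [hm1]) (by linarith [hm2]) (by linarith [hm3, hww])
          refine ⟨x, ?_⟩
          rw [hx, hv1', hv2', hv3']
          refine Prod.ext ?_ (Prod.ext ?_ ?_) <;> dsimp only <;> linarith [h10, h01, h11, hww]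
      · rcases (abs_eq hbpos.le).1 h with h' | h'
        · obtain ⟨hm1, hm2, hm3, hv1', hv2', hv3'⟩ :=
            face2 (al := -(ip u v)) (be := ip u u + ip u v) (ga := ip v v + ip u v)
              (s1 := T.1 + T.2.1 - T.2.2) (s2 := T.1 - T.2.1 + T.2.2) (s3 := T.1 - T.2.1 - T.2.2)
              hal hbe hga (by linarith [haeq]) (by linarith [haeq])
              (by linarith [hceq]) (by linarith [hceq]) (by linarith [hbeq])
          obtain ⟨x, hx⟩ := build_point u v w hw huv huw hvw
            (T.1 + T.2.1 - T.2.2 - -(ip u v)/2)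
            (T.1 - T.2.1 - T.2.2 + (ip v v + ip u v)/2 + -(ip u v)/2 - (T.1 + T.2.1 - T.2.2))
            (by linarith [hm1]) (by linarith [hm2]) (by linarith [hm3, hww])
          refine ⟨x, ?_⟩
          rw [hx, hv1', hv2', hv3']
          refine Prod.ext ?_ (Prod.ext ?_ ?_) <;> dsimp only <;> linarith [h10, h01, h11, hww]
        · obtain ⟨hm1, hm2, hm3, hv1', hv2', hv3'⟩ :=
            face2' (al := -(ip u v)) (be := ip u u + ip u v) (ga := ip v v + ip u v)
              (s1 := T.1 + T.2.1 - T.2.2) (s2 := T.1 - T.2.1 + T.2.2) (s3 := T.1 - T.2.1 - T.2.2)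
              hal hbe hga (by linarith [haeq]) (by linarith [haeq])
              (by linarith [hceq]) (by linarith [hceq]) (by linarith [hbeq])
          obtain ⟨x, hx⟩ := build_point u v w hw huv huw hvw
            (ip u u + ip u v + -(ip u v)/2 - (T.1 + T.2.1 - T.2.2))
            (T.1 + T.2.1 - T.2.2 + (T.1 - T.2.1 - T.2.2) + (ip v v + ip u v)/2 - -(ip u v)/2)
            (by linarith [hm1]) (by linarith [hm2]) (by linarith [hm3, hww])
          refine ⟨x, ?_⟩
          rw [hx, hv1', hv2', hv3']
          refine Prod.ext ?_ (Prod.ext ?_ ?_) <;> dsimp only <;> linarith [h10, h01, h11, hww]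
      · rcases (abs_eq hcpos.le).1 h with h' | h'
        · obtain ⟨hm1, hm2, hm3, hv1', hv2', hv3'⟩ :=
            face3 (al := -(ip u v)) (be := ip u u + ip u v) (ga := ip v v + ip u v)
              (s1 := T.1 + T.2.1 - T.2.2) (s2 := T.1 - T.2.1 + T.2.2) (s3 := T.1 - T.2.1 - T.2.2)
              hal hbe hga (by linarith [haeq]) (by linarith [haeq])
              (by linarith [hbeq]) (by linarith [hbeq]) (by linarith [hceq])
          obtain ⟨x, hx⟩ := build_point u v w hw huv huw hvw
            (T.1 + T.2.1 - T.2.2 - (T.1 - T.2.1 + T.2.2) + (ip u u + ip u v)/2 - -(ip u v)/2)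
            (ip v v + ip u v + -(ip u v)/2 - (T.1 + T.2.1 - T.2.2))
            (by linarith [hm1]) (by linarith [hm2]) (by linarith [hm3, hww])
          refine ⟨x, ?_⟩
          rw [hx, hv1', hv2', hv3']
          refine Prod.ext ?_ (Prod.ext ?_ ?_) <;> dsimp only <;> linarith [h10, h01, h11, hww]
        · obtain ⟨hm1, hm2, hm3, hv1', hv2', hv3'⟩ :=
            face3' (al := -(ip u v)) (be := ip u u + ip u v) (ga := ip v v + ip u v)
              (s1 := T.1 + T.2.1 - T.2.2) (s2 := T.1 - T.2.1 + T.2.2) (s3 := T.1 - T.2.1 - T.2.2)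
              hal hbe hga (by linarith [haeq]) (by linarith [haeq])
              (by linarith [hbeq]) (by linarith [hbeq]) (by linarith [hceq])
          obtain ⟨x, hx⟩ := build_point u v w hw huv huw hvw
            (-(ip u v)/2 + (ip u u + ip u v)/2 - (T.1 + T.2.1 - T.2.2) - (T.1 - T.2.1 + T.2.2))
            (T.1 + T.2.1 - T.2.2 - -(ip u v)/2)
            (by linarith [hm1]) (by linarith [hm2]) (by linarith [hm3, hww])
          refine ⟨x, ?_⟩
          rw [hx, hv1', hv2', hv3']
          refine Prod.ext ?_ (Prod.ext ?_ ?_) <;> dsimp only <;> linarith [h10, h01, h11, hww]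


end
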